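/- arXiv:2205.14185 — 4 statements merged into one kernel-verified Lean document; each statement's English description precedes it below -/
import Mathlib

section
/- Corollary of Theorem 1.3 (Theorem A): The following two sets of polynomial moulds F ∈ ARI coincide: (a) the set of polynomial moulds F such that M := Δ⁻¹F is alternal and push-invariant and there exists a constant mould C = (c_r) with swap M + C circ-neutral, i.e. Σ_{i=0}^{r−1} (circ^i(swap M))(v_1,…,v_r) = −r·c_r for all r ≥ 2 (the defining conditions of the underlying vector space of the elliptic Kashiwara–Vergne Lie algebra krv_ell); and (b) the set of polynomial moulds F such that M := Δ⁻¹F is alternal and push-invariant and there exists a constant mould C = (c_r) with ℱ(dar⁻¹F)(u_1,…,u_r) = −r·c_r·(u_2+⋯+u_r) for all r ≥ 2. Moreover, for a given F the same constant mould C works in (a) and in (b). -/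
/-!
Moulds over ℚ: a mould is a family `A = (A_r)_{r ≥ 0}` where `A_r` lies in the
field `ℚ(u_1, …, u_r)` of rational functions in `r` commuting variables,
realized here as the fraction field of `MvPolynomial (Fin r) ℚ`.
Substitution of ℚ-linearly independent linear forms is realized by lifting the
corresponding (injective) polynomial substitution map to the fraction fields.
-/

noncomputable section

/-- The polynomial ring `ℚ[u_1, …, u_r]` (variables are 0-indexed). -/
abbrev MPoly (r : ℕ) : Type := MvPolynomial (Fin r) ℚ

/-- The field of rational functions `ℚ(u_1, …, u_r)`. -/
abbrev MFrac (r : ℕ) : Type := FractionRing (MPoly r)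

/-- A mould over ℚ: its depth-`r` part is a rational function of `r` variables;
its depth-`0` part is a constant. -/
abbrev Mould : Type := (r : ℕ) → MFrac r

/-- The canonical embedding of polynomials into rational functions. -/
def toF {r : ℕ} (p : MPoly r) : MFrac r := algebraMap (MPoly r) (MFrac r) p

/-- The constant `q` viewed as a rational function in `r` variables. -/
def constF (r : ℕ) (q : ℚ) : MFrac r := toF (MvPolynomial.C q)

/-- The variable `u_{k+1}` (0-indexed: `X k`), with junk value `0` out of range. -/
def Xn (r k : ℕ) : MPoly r := if h : k < r then MvPolynomial.X ⟨k, h⟩ else 0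

/-- The linear form `u_1 + ⋯ + u_n`. -/
def sumXn (r n : ℕ) : MPoly r := ∑ k ∈ Finset.range n, Xn r k

/-- Substitution `A(ℓ_1, …, ℓ_s)` of a family of polynomials (in applications:
ℚ-linearly independent linear forms in `u_1, …, u_r`) into a rational function
`A ∈ ℚ(u_1,…,u_s)`, obtained by lifting the polynomial substitution map to the
fraction fields; junk value `0` if the substitution map is not injective
(which never occurs for linearly independent linear forms). -/
def msubst {s r : ℕ} (ℓ : Fin s → MPoly r) (A : MFrac s) : MFrac r := by
  classical
  exact if h : Function.Injective ((algebraMap (MPoly r) (MFrac r)).comp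
      (MvPolynomial.aeval (R := ℚ) ℓ).toRingHom)
    then IsFractionRing.lift h A else 0

/-! ### The basic mould operators -/

/-- Arguments of the swap: `(swap A)(v_1,…,v_r) = A(v_r, v_{r-1}-v_r, …, v_1-v_2)`. -/
def swapArgs (r : ℕ) : Fin r → MPoly r := fun m => Xn r (r - 1 - m.val) - Xn r (r - m.val)

/-- The swap of a mould. -/
def swapM (A : Mould) : Mould := fun r => msubst (swapArgs r) (A r)

/-- `(push_u A)(u_1,…,u_r) = A(−u_1−⋯−u_r, u_1,…,u_{r−1})`. -/
def pushArgs (r : ℕ) : Fin r → MPoly r := fun m =>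
  if m.val = 0 then -(sumXn r r) else Xn r (m.val - 1)

def pushU (A : Mould) : Mould := fun r => msubst (pushArgs r) (A r)

/-- `(push_u⁻¹ A)(u_1,…,u_r) = A(u_2,…,u_r, −u_1−⋯−u_r)`. -/
def pushInvArgs (r : ℕ) : Fin r → MPoly r := fun m =>
  if m.val = r - 1 then -(sumXn r r) else Xn r (m.val + 1)

def pushUInv (A : Mould) : Mould := fun r => msubst (pushInvArgs r) (A r)

/-- `(push_v B)(v_1,…,v_r) = B(−v_r, v_1−v_r, …, v_{r−1}−v_r)`. -/
def pushVArgs (r : ℕ) : Fin r → MPoly r := fun m =>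
  if m.val = 0 then -(Xn r (r - 1)) else Xn r (m.val - 1) - Xn r (r - 1)

def pushV (A : Mould) : Mould := fun r => msubst (pushVArgs r) (A r)

/-- `(push_v⁻¹ B)(v_1,…,v_r) = B(v_2−v_1, …, v_r−v_1, −v_1)`. -/
def pushVInvArgs (r : ℕ) : Fin r → MPoly r := fun m =>
  if m.val = r - 1 then -(Xn r 0) else Xn r (m.val + 1) - Xn r 0

def pushVInv (A : Mould) : Mould := fun r => msubst (pushVInvArgs r) (A r)

/-- `(circ B)(v_1,…,v_r) = B(v_2,…,v_r,v_1)`. -/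
def circArgs (r : ℕ) : Fin r → MPoly r := fun m =>
  if m.val = r - 1 then Xn r 0 else Xn r (m.val + 1)

def circM (A : Mould) : Mould := fun r => msubst (circArgs r) (A r)

/-- `(dur A)(u_1,…,u_r) = (u_1+⋯+u_r)·A(u_1,…,u_r)`. -/
def durM (A : Mould) : Mould := fun r => toF (sumXn r r) * A r

/-- `(dar A)(u_1,…,u_r) = u_1⋯u_r·A(u_1,…,u_r)`. -/
def darM (A : Mould) : Mould := fun r => toF (∏ k ∈ Finset.range r, Xn r k) * A r

/-- `(dar⁻¹ A)(u_1,…,u_r) = A(u_1,…,u_r)/(u_1⋯u_r)`. -/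
def darInv (A : Mould) : Mould := fun r => A r / toF (∏ k ∈ Finset.range r, Xn r k)

/-- `Δ = dar ∘ dur`. -/
def deltaM (A : Mould) : Mould := darM (durM A)

/-- `Δ⁻¹`, dividing the depth-`r` part by `u_1⋯u_r·(u_1+⋯+u_r)`. -/
def deltaInv (A : Mould) : Mould := fun r =>
  A r / toF ((∏ k ∈ Finset.range r, Xn r k) * sumXn r r)

/-! ### The Fay operator -/

/-- Arguments of the `i`-th Fay term (`1 ≤ i ≤ r`):
`(u_2,…,u_i, −ū_i, ū_{i+1}, u_{i+2},…,u_r)` for `i < r`, and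
`(u_2,…,u_r, −ū_r)` for `i = r`, where `ū_i = u_1+⋯+u_i`. -/
def fayArgs (r i : ℕ) : Fin r → MPoly r := fun m =>
  if m.val + 1 < i then Xn r (m.val + 1)
  else if m.val + 1 = i then -(sumXn r i)
  else if m.val = i then sumXn r (i + 1)
  else Xn r m.val

/-- The Fay operator:
`ℱ(B)(u_1,…,u_r) = B(u_1,…,u_r) + B(u_2,…,u_r,−ū_r) + Σ_{i=1}^{r−1} B(u_2,…,u_i,−ū_i,ū_{i+1},u_{i+2},…,u_r)`. -/
def Fay (A : Mould) : Mould := fun r =>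
  A r + ∑ i ∈ Finset.Icc 1 r, msubst (fayArgs r i) (A r)

/-! ### Shuffles, alternality, push-invariance and circ-neutrality -/

/-- Arguments realizing the shuffle of `(u_1,…,u_k)` and `(u_{k+1},…,u_r)` whose
set of positions for the first word is `S` (with `S.card = k`). -/
def shuffleArgs (r : ℕ) (S : Finset (Fin r)) : Fin r → MPoly r := fun m =>
  if m ∈ S then Xn r ((S.filter (fun x => x < m)).card)
  else Xn r (S.card + ((Sᶜ.filter (fun x => x < m)).card))

/-- A mould is alternal if all its shuffle sums
`A(sh((u_1,…,u_k),(u_{k+1},…,u_r)))` for `1 ≤ k ≤ r−1` vanish. -/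
def Alternal (A : Mould) : Prop :=
  ∀ r k : ℕ, 1 ≤ k → k < r →
    ∑ S ∈ Finset.powersetCard k (Finset.univ : Finset (Fin r)),
      msubst (shuffleArgs r S) (A r) = 0

/-- A mould is push-invariant if `push_u A = A` in every depth `r ≥ 1`. -/
def PushInvariant (A : Mould) : Prop := ∀ r : ℕ, 1 ≤ r → pushU A r = A r

/-- Arguments of the `i`-th term (`1 ≤ i ≤ r`) of the shuffle sum
`B(sh((v_1),(v_2,…,v_r)))`, namely `(v_2,…,v_i, v_1, v_{i+1},…,v_r)`. -/
def sh1Args (r i : ℕ) : Fin r → MPoly r := fun m =>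
  if m.val + 1 < i then Xn r (m.val + 1)
  else if m.val + 1 = i then Xn r 0
  else Xn r m.val

/-! ### Mould multiplication, `arat`, and exponentials -/

/-- Arguments `(u_{a+1}, …, u_{a+s})` (a consecutive segment of variables). -/
def segArgs (r a : ℕ) {s : ℕ} : Fin s → MPoly r := fun m => Xn r (a + m.val)

/-- Arguments `(u_1,…,u_{a−1}, u_a+⋯+u_b, u_{b+1},…,u_r)` (the block `u_a…u_b`
merged into a single sum), of length `s = r − (b − a)`. -/
def mergeArgs (r a b : ℕ) {s : ℕ} : Fin s → MPoly r := fun m =>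
  if m.val + 1 < a then Xn r m.val
  else if m.val + 1 = a then ∑ k ∈ Finset.Icc (a - 1) (b - 1), Xn r k
  else Xn r (b + m.val - a)

/-- The mould `arat(M)·Q`. -/
def arat (M Q : Mould) : Mould := fun r =>
  (∑ i ∈ Finset.Icc 1 (r - 1), ∑ j ∈ Finset.Icc (i + 1) (r - 1),
      msubst (segArgs r i) (M (j - i)) *
        (msubst (mergeArgs r i j) (Q (r - (j - i))) -
          msubst (mergeArgs r (i + 1) (j + 1)) (Q (r - (j - i)))))
  + (∑ i ∈ Finset.Icc 1 (r - 1),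
      msubst (segArgs r 0) (M i) *
        (msubst (segArgs r i) (Q (r - i)) - msubst (mergeArgs r 1 (i + 1)) (Q (r - i))))
  + (∑ i ∈ Finset.Icc 1 (r - 1),
      msubst (segArgs r i) (M (r - i)) *
        (msubst (mergeArgs r i r) (Q i) - msubst (segArgs r 0) (Q i)))

/-- Mould multiplication `mu(A,B)(u_1,…,u_r) = Σ_i A(u_1,…,u_i)B(u_{i+1},…,u_r)`. -/
def muM (A B : Mould) : Mould := fun r =>
  ∑ i ∈ Finset.range (r + 1), msubst (segArgs r 0) (A i) * msubst (segArgs r i) (B (r - i))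

/-- The unit mould for `mu`. -/
def oneMould : Mould := fun r => if r = 0 then 1 else 0

/-- `mu`-powers of a mould. -/
def muPow (Q : Mould) : ℕ → Mould
  | 0 => oneMould
  | n + 1 => muM (muPow Q n) Q

/-- `exp_mu(Q) = Σ_{n≥0} Q^{·n}/n!`; for `Q ∈ ARI` this is a finite sum in each
depth, since `Q^{·n}` vanishes in depths `< n`. -/
def expMu (Q : Mould) : Mould := fun r =>
  ∑ n ∈ Finset.range (r + 1), constF r (1 / (n.factorial : ℚ)) * muPow Q n r

/-- A polynomial mould: each depth-`r` part is (the image of) a polynomial. -/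
def IsPolynomialMould (A : Mould) : Prop :=
  ∀ r : ℕ, A r ∈ Set.range (algebraMap (MPoly r) (MFrac r))

/-- Condition (a): `M := Δ⁻¹F` has `swap M + C` circ-neutral. -/
def CondA (A : Mould) (C : ℕ → ℚ) : Prop :=
  ∀ r : ℕ, 2 ≤ r →
    ∑ i ∈ Finset.range r, (circM^[i] (swapM (deltaInv A))) r
      = constF r (-(r : ℚ) * C r)

/-- Condition (b): the corrected Fay relations for `dar⁻¹F` with constants `C`. -/
def CondB (A : Mould) (C : ℕ → ℚ) : Prop :=
  ∀ r : ℕ, 2 ≤ r →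
    Fay (darInv A) r = constF r (-(r : ℚ) * C r) * toF (sumXn r r - Xn r 0)

open MvPolynomial Finset

namespace KVAux

variable {q s r : ℕ}

/-- Injectivity of the lifted substitution ring hom (the condition in `msubst`). -/
abbrev LInj (ℓ : Fin s → MPoly r) : Prop :=
  Function.Injective ((algebraMap (MPoly r) (MFrac r)).comp
    (MvPolynomial.aeval (R := ℚ) ℓ).toRingHom)

lemma msubst_pos {ℓ : Fin s → MPoly r} (h : LInj ℓ) (A : MFrac s) :
    msubst ℓ A = IsFractionRing.lift h A := by
  unfold msubst; rw [dif_pos h]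

lemma LInj.of_retract {ℓ : Fin s → MPoly r} (τ : Fin r → MPoly s)
    (hτ : ∀ m, aeval (R := ℚ) τ (ℓ m) = X m) : LInj ℓ := by
  have hcomp : (aeval (R := ℚ) τ).comp (aeval (R := ℚ) ℓ) = AlgHom.id ℚ (MPoly s) := by
    apply MvPolynomial.algHom_ext; intro m
    rw [AlgHom.comp_apply, MvPolynomial.aeval_X, hτ m, AlgHom.id_apply]
  have h1 : Function.Injective (aeval (R := ℚ) ℓ) := by
    have hli : ∀ p : MPoly s, aeval (R := ℚ) τ (aeval (R := ℚ) ℓ p) = p := fun p => by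
      have := congrArg (fun f : MPoly s →ₐ[ℚ] MPoly s => f p) hcomp
      simpa using this
    exact Function.LeftInverse.injective hli
  exact fun a b hab => h1 (IsFractionRing.injective (MPoly r) (MFrac r) hab)

lemma aeval_aeval (g : Fin q → MPoly s) (ℓ : Fin s → MPoly r) (p : MPoly q) :
    aeval (R := ℚ) (fun m => aeval (R := ℚ) ℓ (g m)) p
      = aeval (R := ℚ) ℓ (aeval (R := ℚ) g p) := by
  have hc : (aeval (R := ℚ) ℓ).comp (aeval (R := ℚ) g)
      = aeval (R := ℚ) (fun m => aeval (R := ℚ) ℓ (g m)) := by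
    apply MvPolynomial.algHom_ext; intro m; simp
  rw [← hc]; rfl

lemma lift_key {g : Fin q → MPoly s} {ℓ : Fin s → MPoly r} (hℓ : LInj ℓ) :
    ((algebraMap (MPoly r) (MFrac r)).comp
        (MvPolynomial.aeval (R := ℚ) (fun m => aeval (R := ℚ) ℓ (g m))).toRingHom)
      = (IsFractionRing.lift hℓ).comp ((algebraMap (MPoly s) (MFrac s)).comp
          (MvPolynomial.aeval (R := ℚ) g).toRingHom) := by
  ext p <;> simp [IsFractionRing.lift_algebraMap]

lemma LInj.comp {g : Fin q → MPoly s} {ℓ : Fin s → MPoly r} (hg : LInj g) (hℓ : LInj ℓ) :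
    LInj (fun m => aeval (R := ℚ) ℓ (g m)) := by
  have hk := lift_key (g := g) hℓ
  rw [LInj, hk, RingHom.coe_comp]
  exact Function.Injective.comp (RingHom.injective _) hg

lemma msubst_msubst {g : Fin q → MPoly s} {ℓ : Fin s → MPoly r}
    (hg : LInj g) (hℓ : LInj ℓ) (A : MFrac q) :
    msubst ℓ (msubst g A) = msubst (fun m => aeval (R := ℚ) ℓ (g m)) A := by
  have hc : LInj (fun m => aeval (R := ℚ) ℓ (g m)) := hg.comp hℓ
  rw [msubst_pos hg, msubst_pos hℓ, msubst_pos hc]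
  obtain ⟨x, y, -, rfl⟩ := IsFractionRing.div_surjective (A := MPoly q) A
  simp only [map_div₀, IsFractionRing.lift_algebraMap, RingHom.coe_comp, Function.comp_apply,
    AlgHom.toRingHom_eq_coe, RingHom.coe_coe, aeval_aeval]

lemma msubst_toF {ℓ : Fin s → MPoly r} (h : LInj ℓ) (p : MPoly s) :
    msubst ℓ (toF p) = toF (aeval (R := ℚ) ℓ p) := by
  rw [msubst_pos h, toF, IsFractionRing.lift_algebraMap]; rfl

lemma msubst_add {ℓ : Fin s → MPoly r} (h : LInj ℓ) (a b : MFrac s) :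
    msubst ℓ (a + b) = msubst ℓ a + msubst ℓ b := by
  rw [msubst_pos h, msubst_pos h, msubst_pos h, map_add]

lemma msubst_mul {ℓ : Fin s → MPoly r} (h : LInj ℓ) (a b : MFrac s) :
    msubst ℓ (a * b) = msubst ℓ a * msubst ℓ b := by
  rw [msubst_pos h, msubst_pos h, msubst_pos h, map_mul]

lemma msubst_sum {ℓ : Fin s → MPoly r} (h : LInj ℓ) {ι : Type*} (t : Finset ι)
    (f : ι → MFrac s) : msubst ℓ (∑ i ∈ t, f i) = ∑ i ∈ t, msubst ℓ (f i) := by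
  simp only [msubst_pos h, map_sum]

lemma msubst_injective {ℓ : Fin s → MPoly r} (h : LInj ℓ) :
    Function.Injective (msubst ℓ) := by
  intro a b hab
  rw [msubst_pos h, msubst_pos h] at hab
  exact RingHom.injective (IsFractionRing.lift h) hab

lemma msubst_X (A : MFrac r) : msubst (fun m : Fin r => (X m : MPoly r)) A = A := by
  have h : LInj (fun m : Fin r => (X m : MPoly r)) :=
    LInj.of_retract (fun m => X m) (by intro m; simp)
  rw [msubst_pos h]
  obtain ⟨x, y, -, rfl⟩ := IsFractionRing.div_surjective (A := MPoly r) A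
  simp [map_div₀, IsFractionRing.lift_algebraMap]

lemma aeval_Xn (ℓ : Fin s → MPoly r) (k : ℕ) :
    aeval (R := ℚ) ℓ (Xn s k) = if h : k < s then ℓ ⟨k, h⟩ else 0 := by
  unfold Xn; split <;> simp

lemma aeval_sumXn (ℓ : Fin s → MPoly r) (n : ℕ) :
    aeval (R := ℚ) ℓ (sumXn s n)
      = ∑ k ∈ Finset.range n, aeval (R := ℚ) ℓ (Xn s k) := by
  unfold sumXn; rw [map_sum]

end KVAux
namespace KVAux

open Finset

variable {r : ℕ}

lemma Xn_of_ge {k : ℕ} (h : r ≤ k) : Xn r k = 0 := by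
  unfold Xn; rw [dif_neg (by omega)]

lemma Xn_val (m : Fin r) : Xn r m.val = X m := by
  unfold Xn; rw [dif_pos m.isLt]

lemma aeval_Xn_lt {s : ℕ} (ℓ : Fin s → MPoly r) {k : ℕ} (h : k < s) :
    aeval (R := ℚ) ℓ (Xn s k) = ℓ ⟨k, h⟩ := by rw [aeval_Xn, dif_pos h]

lemma sumXn_succ (n : ℕ) : sumXn r (n + 1) = sumXn r n + Xn r n :=
  Finset.sum_range_succ _ n

lemma sumXn_zero : sumXn r 0 = 0 := rfl

lemma sumXn_one (hr : 1 ≤ r) : sumXn r 1 = Xn r 0 := by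
  rw [show (1 : ℕ) = 0 + 1 from rfl, sumXn_succ, sumXn_zero, zero_add]

lemma Xn_eq_sub (k : ℕ) : Xn r k = sumXn r (k + 1) - sumXn r k := by
  rw [sumXn_succ]; ring

lemma sumXn_sub_sumXn {a b : ℕ} (h : a ≤ b) :
    sumXn r b - sumXn r a = ∑ k ∈ Finset.Ico a b, Xn r k := by
  unfold sumXn
  rw [Finset.range_eq_Ico, Finset.range_eq_Ico,
    ← Finset.sum_Ico_consecutive _ (Nat.zero_le a) h]
  ring

lemma sumXn_of_ge {n : ℕ} (h : r ≤ n) : sumXn r n = sumXn r r := by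
  unfold sumXn
  rw [Finset.range_eq_Ico, Finset.range_eq_Ico,
    ← Finset.sum_Ico_consecutive _ (Nat.zero_le r) h, add_eq_left]
  exact Finset.sum_eq_zero fun k hk => Xn_of_ge (Finset.mem_Ico.mp hk).1

lemma aeval_sumXn_full (ℓ : Fin r → MPoly r) :
    aeval (R := ℚ) ℓ (sumXn r r) = ∑ k : Fin r, ℓ k := by
  rw [aeval_sumXn, ← Fin.sum_univ_eq_sum_range]
  exact Finset.sum_congr rfl fun k _ => by rw [aeval_Xn_lt _ k.isLt]

lemma aeval_sumXn_eq (ℓ : Fin r → MPoly r) (g : ℕ → MPoly r) {n : ℕ} (hn : n ≤ r)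
    (hg : ∀ k, (h : k < n) → ℓ ⟨k, h.trans_le hn⟩ = g k) :
    aeval (R := ℚ) ℓ (sumXn r n) = ∑ k ∈ Finset.range n, g k := by
  rw [aeval_sumXn]
  refine Finset.sum_congr rfl fun k hk => ?_
  have hk' := Finset.mem_range.mp hk
  rw [aeval_Xn_lt _ (hk'.trans_le hn), hg k hk']

/-! ### Retract families -/

/-- Inverse of the swap substitution: `v_j = u_1 + ⋯ + u_{r-j+1}` (0-indexed). -/
def sigmaArgs (r : ℕ) : Fin r → MPoly r := fun m => sumXn r (r - m.val)

/-- Inverse of `circArgs`. -/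
def circInvArgs (r : ℕ) : Fin r → MPoly r := fun m =>
  if m.val = 0 then Xn r (r - 1) else Xn r (m.val - 1)

/-- Retract of `fayArgs r j` (for `1 ≤ j ≤ r`). -/
def fayInvArgs (r j : ℕ) : Fin r → MPoly r := fun m =>
  if m.val = 0 then -(sumXn r j)
  else if m.val < j then Xn r (m.val - 1)
  else if m.val = j then Xn r j + Xn r (j - 1)
  else Xn r m.val

lemma retract_sigma (m : Fin r) :
    aeval (R := ℚ) (swapArgs r) (sigmaArgs r m) = X m := by
  unfold sigmaArgs
  rw [aeval_sumXn]
  have h1 : ∀ k ∈ Finset.range (r - m.val),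
      aeval (R := ℚ) (swapArgs r) (Xn r k)
        = (fun k => Xn r (r - k)) (k + 1) - (fun k => Xn r (r - k)) k := by
    intro k hk
    rw [Finset.mem_range] at hk
    rw [aeval_Xn_lt _ (by omega)]
    unfold swapArgs
    simp only
    congr 2
    omega
  rw [Finset.sum_congr rfl h1, Finset.sum_range_sub (f := fun k => Xn r (r - k))]
  rw [Nat.sub_zero, Xn_of_ge (le_refl r), sub_zero,
    show r - (r - m.val) = m.val by omega, Xn_val]

lemma retract_swap (m : Fin r) :
    aeval (R := ℚ) (sigmaArgs r) (swapArgs r m) = X m := by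
  unfold swapArgs
  rw [map_sub]
  have h1 : aeval (R := ℚ) (sigmaArgs r) (Xn r (r - 1 - m.val)) = sumXn r (m.val + 1) := by
    rw [aeval_Xn_lt _ (by omega)]
    unfold sigmaArgs
    simp only
    congr 1
    omega
  have h2 : aeval (R := ℚ) (sigmaArgs r) (Xn r (r - m.val)) = sumXn r m.val := by
    rcases Nat.eq_zero_or_pos m.val with h | h
    · rw [h, Nat.sub_zero, Xn_of_ge (le_refl r), map_zero, sumXn_zero]
    · rw [aeval_Xn_lt _ (by omega)]
      unfold sigmaArgs
      simp only
      congr 1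
      omega
  rw [h1, h2, ← Xn_eq_sub, Xn_val]

lemma sum_pushArgs (hr : 1 ≤ r) :
    ∑ k : Fin r, pushArgs r k = -(Xn r (r - 1)) := by
  have key : (∑ k : Fin r, pushArgs r k)
      = ∑ k ∈ Finset.range r, (fun n : ℕ => if n = 0 then -(sumXn r r) else Xn r (n - 1)) k := by
    rw [← Fin.sum_univ_eq_sum_range]
    exact Finset.sum_congr rfl fun k _ => rfl
  rw [key]
  obtain ⟨r', rfl⟩ : ∃ r', r = r' + 1 := ⟨r - 1, by omega⟩
  rw [Finset.sum_range_succ']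
  have h1 : ∀ k ∈ Finset.range r',
      (fun n : ℕ => if n = 0 then -(sumXn (r' + 1) (r' + 1)) else Xn (r' + 1) (n - 1)) (k + 1)
        = Xn (r' + 1) k := by
    intro k hk
    simp only
    rw [if_neg (Nat.succ_ne_zero k), Nat.add_sub_cancel]
  rw [Finset.sum_congr rfl h1, if_pos (rfl : (0 : ℕ) = 0)]
  have h2 : ∑ k ∈ Finset.range r', Xn (r' + 1) k = sumXn (r' + 1) r' := rfl
  rw [h2, Nat.add_sub_cancel, sumXn_succ]
  ring

lemma sum_pushInvArgs (hr : 1 ≤ r) :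
    ∑ k : Fin r, pushInvArgs r k = -(Xn r 0) := by
  have key : (∑ k : Fin r, pushInvArgs r k)
      = ∑ k ∈ Finset.range r, (fun n : ℕ => if n = r - 1 then -(sumXn r r) else Xn r (n + 1)) k := by
    rw [← Fin.sum_univ_eq_sum_range]
    exact Finset.sum_congr rfl fun k _ => rfl
  rw [key]
  obtain ⟨r', rfl⟩ : ∃ r', r = r' + 1 := ⟨r - 1, by omega⟩
  rw [Finset.sum_range_succ]
  rw [if_pos (by omega : r' = r' + 1 - 1)]
  have h1 : ∀ k ∈ Finset.range r',
      (if k = r' + 1 - 1 then -(sumXn (r' + 1) (r' + 1)) else Xn (r' + 1) (k + 1))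
        = Xn (r' + 1) (k + 1) := by
    intro k hk
    simp only [Finset.mem_range] at hk
    rw [if_neg (by omega)]
  rw [Finset.sum_congr rfl h1]
  have h2 : ∑ k ∈ Finset.range r', Xn (r' + 1) (k + 1)
      = ∑ k ∈ Finset.Ico 1 (r' + 1), Xn (r' + 1) k := by
    rw [Finset.sum_Ico_eq_sum_range]
    refine Finset.sum_congr rfl fun k _ => by congr 1; omega
  rw [h2, ← sumXn_sub_sumXn (by omega : 1 ≤ r' + 1), sumXn_one (by omega)]
  ring

lemma retract_push (m : Fin r) :
    aeval (R := ℚ) (pushInvArgs r) (pushArgs r m) = X m := by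
  unfold pushArgs
  rcases Nat.eq_zero_or_pos m.val with h | h
  · rw [if_pos h, map_neg, aeval_sumXn_full, sum_pushInvArgs (by omega), neg_neg,
      ← h, Xn_val]
  · rw [if_neg (by omega), aeval_Xn_lt _ (by omega)]
    unfold pushInvArgs
    simp only
    rw [if_neg (by omega), show m.val - 1 + 1 = m.val by omega, Xn_val]

lemma retract_pushInv (m : Fin r) :
    aeval (R := ℚ) (pushArgs r) (pushInvArgs r m) = X m := by
  unfold pushInvArgs
  rcases Nat.lt_or_ge m.val (r - 1) with h | h
  · rw [if_neg (by omega), aeval_Xn_lt _ (by omega)]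
    unfold pushArgs
    simp only
    rw [if_neg (by omega), Nat.add_sub_cancel, Xn_val]
  · have hm : m.val = r - 1 := by omega
    rw [if_pos hm, map_neg, aeval_sumXn_full, sum_pushArgs (by omega), neg_neg, ← hm, Xn_val]

lemma retract_circ (m : Fin r) :
    aeval (R := ℚ) (circInvArgs r) (circArgs r m) = X m := by
  unfold circArgs
  rcases Nat.lt_or_ge m.val (r - 1) with h | h
  · rw [if_neg (by omega), aeval_Xn_lt _ (by omega)]
    unfold circInvArgs
    simp only
    rw [if_neg (by omega), Nat.add_sub_cancel, Xn_val]
  · have hm : m.val = r - 1 := by omega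
    rw [if_pos hm, aeval_Xn_lt _ (by omega)]
    unfold circInvArgs
    show Xn r (r - 1) = X m
    rw [← hm, Xn_val]

lemma sum_fayInv_aux {j : ℕ} (hj : 1 ≤ j) (hjr : j ≤ r) :
    ∑ k ∈ Finset.range j, (fun n : ℕ =>
      if n = 0 then -(sumXn r j) else Xn r (n - 1)) k = -(Xn r (j - 1)) := by
  obtain ⟨j', rfl⟩ : ∃ j', j = j' + 1 := ⟨j - 1, by omega⟩
  rw [Finset.sum_range_succ']
  have h1 : ∀ k ∈ Finset.range j',
      (fun n : ℕ => if n = 0 then -(sumXn r (j' + 1)) else Xn r (n - 1)) (k + 1) = Xn r k := by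
    intro k hk
    simp only
    rw [if_neg (Nat.succ_ne_zero k), Nat.add_sub_cancel]
  rw [Finset.sum_congr rfl h1, if_pos (rfl : (0 : ℕ) = 0)]
  have h2 : ∑ k ∈ Finset.range j', Xn r k = sumXn r j' := rfl
  rw [h2, Nat.add_sub_cancel, sumXn_succ]
  ring

lemma retract_fay {j : ℕ} (hj : 1 ≤ j) (hjr : j ≤ r) (m : Fin r) :
    aeval (R := ℚ) (fayInvArgs r j) (fayArgs r j m) = X m := by
  unfold fayArgs
  rcases Nat.lt_or_ge (m.val + 1) j with h1 | h1
  · rw [if_pos h1, aeval_Xn_lt _ (by omega)]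
    unfold fayInvArgs
    simp only
    rw [if_neg (by omega), if_pos (by omega), Nat.add_sub_cancel, Xn_val]
  rcases Nat.eq_or_lt_of_le h1 with h2 | h2
  · -- m.val + 1 = j
    rw [if_neg (by omega), if_pos h2.symm, map_neg,
      aeval_sumXn_eq (fayInvArgs r j) (fun n => if n = 0 then -(sumXn r j) else Xn r (n - 1))
        hjr ?hg, sum_fayInv_aux hj hjr, neg_neg, show j - 1 = m.val by omega, Xn_val]
    case hg =>
      intro k hk
      unfold fayInvArgs
      simp only
      split_ifs <;> first | rfl | omega
  rcases Nat.eq_or_lt_of_le h2 with h3 | h3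
  · -- m.val = j
    have hmj : m.val = j := by omega
    have hjr' : j + 1 ≤ r := by omega
    rw [if_neg (by omega), if_neg (by omega), if_pos hmj,
      aeval_sumXn_eq (fayInvArgs r j) (fun n =>
        if n = 0 then -(sumXn r j) else if n < j then Xn r (n - 1)
        else Xn r j + Xn r (j - 1)) hjr' ?hg]
    case hg =>
      intro k hk
      unfold fayInvArgs
      simp only
      split_ifs <;> first | rfl | omega
    rw [Finset.sum_range_succ, if_neg (by omega), if_neg (by omega)]
    have h4 : ∀ k ∈ Finset.range j,
        (if k = 0 then -(sumXn r j) else if k < j then Xn r (k - 1)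
          else Xn r j + Xn r (j - 1))
        = (fun n : ℕ => if n = 0 then -(sumXn r j) else Xn r (n - 1)) k := by
      intro k hk
      simp only [Finset.mem_range] at hk
      simp only
      split_ifs <;> first | rfl | omega
    rw [Finset.sum_congr rfl h4, sum_fayInv_aux hj hjr]
    have hfin : -Xn r (j - 1) + (Xn r j + Xn r (j - 1)) = Xn r j := by ring
    rw [hfin, ← hmj, Xn_val]
  · -- m.val > j
    rw [if_neg (by omega), if_neg (by omega), if_neg (by omega), aeval_Xn_lt _ m.isLt]
    unfold fayInvArgs
    simp only
    rw [if_neg (by omega), if_neg (by omega), if_neg (by omega), Xn_val]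

end KVAux
namespace KVAux

open Finset
open Fin.NatCast

variable {r : ℕ}

lemma linj_swap : LInj (swapArgs r) := LInj.of_retract (sigmaArgs r) retract_swap
lemma linj_sigma : LInj (sigmaArgs r) := LInj.of_retract (swapArgs r) retract_sigma
lemma linj_push : LInj (pushArgs r) := LInj.of_retract (pushInvArgs r) retract_push
lemma linj_pushInv : LInj (pushInvArgs r) := LInj.of_retract (pushArgs r) retract_pushInv
lemma linj_circ : LInj (circArgs r) := LInj.of_retract (circInvArgs r) retract_circ
lemma linj_fay {j : ℕ} (hj : 1 ≤ j) (hjr : j ≤ r) : LInj (fayArgs r j) :=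
  LInj.of_retract (fayInvArgs r j) (retract_fay hj hjr)

/-! ### mod-arithmetic helpers -/

lemma add_one_mod (a n : ℕ) : (a + 1) % n = (a % n + 1) % n := by
  conv_lhs => rw [← Nat.div_add_mod a n]
  rw [Nat.add_assoc, Nat.mul_add_mod]

/-! ### iterates of circ -/

def rotIdx (r i : ℕ) : Fin r → MPoly r := fun m => Xn r ((m.val + i) % r)

lemma rotIdx_zero : rotIdx r 0 = fun m : Fin r => (X m : MPoly r) := by
  funext m; unfold rotIdx
  rw [Nat.add_zero, Nat.mod_eq_of_lt m.isLt, Xn_val]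

lemma rotIdx_step (i : ℕ) (m : Fin r) :
    aeval (R := ℚ) (circArgs r) (rotIdx r i m) = rotIdx r (i + 1) m := by
  have hr : 0 < r := m.pos
  unfold rotIdx
  rw [← Nat.add_assoc]
  have hlt : (m.val + i) % r < r := Nat.mod_lt _ hr
  rw [aeval_Xn_lt _ hlt]
  unfold circArgs
  simp only
  rcases eq_or_ne ((m.val + i) % r) (r - 1) with h | h
  · rw [if_pos h]
    have : (m.val + i + 1) % r = 0 := by
      rw [add_one_mod, h, show r - 1 + 1 = r by omega, Nat.mod_self]
    rw [this]
  · rw [if_neg h]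
    have : (m.val + i + 1) % r = (m.val + i) % r + 1 := by
      rw [add_one_mod, Nat.mod_eq_of_lt (by omega)]
    rw [this]

lemma circ_iter (B : Mould) (i : ℕ) :
    (circM^[i] B) r = msubst (rotIdx r i) (B r) ∧ LInj (rotIdx r i) := by
  induction i with
  | zero =>
    constructor
    · rw [Function.iterate_zero, id_eq, rotIdx_zero, msubst_X]
    · rw [rotIdx_zero]
      exact LInj.of_retract (fun m => X m) (by intro m; simp)
  | succ i ih =>
    have hfam : (fun m => aeval (R := ℚ) (circArgs r) (rotIdx r i m)) = rotIdx r (i + 1) :=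
      funext (rotIdx_step i)
    constructor
    · rw [Function.iterate_succ_apply']
      show msubst (circArgs r) ((circM^[i] B) r) = _
      rw [ih.1, msubst_msubst ih.2 linj_circ, hfam]
    · have := ih.2.comp (linj_circ (r := r))
      rwa [hfam] at this

/-! ### rotation of arguments via push-invariance -/

lemma msubst_pushInv_eq {Mr : MFrac r} (hP : msubst (pushArgs r) Mr = Mr) :
    msubst (pushInvArgs r) Mr = Mr := by
  conv_lhs => rw [← hP]
  rw [msubst_msubst linj_push linj_pushInv,
    show (fun m => aeval (R := ℚ) (pushInvArgs r) (pushArgs r m))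
      = fun m : Fin r => (X m : MPoly r) from funext retract_push, msubst_X]

lemma unrot_step {Mr : MFrac r} {ℓ : Fin r → MPoly r} (hℓ : LInj ℓ)
    (hPi : msubst (pushInvArgs r) Mr = Mr) :
    msubst ℓ Mr = msubst (fun m => aeval (R := ℚ) ℓ (pushInvArgs r m)) Mr := by
  conv_lhs => rw [← hPi]
  rw [msubst_msubst linj_pushInv hℓ]

/-! ### the cyclic word of a Fay term -/

def wordF (r j : ℕ) : Fin (r + 1) → MPoly r := fun k =>
  if k.val = 0 then Xn r 0 - sumXn r r
  else if k.val < j then Xn r k.val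
  else if k.val = j then -(sumXn r j)
  else if k.val = j + 1 then sumXn r (j + 1)
  else Xn r (k.val - 1)

def argsOf (r j t : ℕ) : Fin r → MPoly r :=
  fun m => wordF r j (((m.val + 1 + t : ℕ) : Fin (r + 1)))

lemma sum_wordF {j : ℕ} (hj : 1 ≤ j) (hjr : j + 1 ≤ r) :
    ∑ k : Fin (r + 1), wordF r j k = 0 := by
  have key : (∑ k : Fin (r + 1), wordF r j k)
      = ∑ n ∈ Finset.range (r + 1), (fun n : ℕ =>
          if n = 0 then Xn r 0 - sumXn r r
          else if n < j then Xn r n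
          else if n = j then -(sumXn r j)
          else if n = j + 1 then sumXn r (j + 1)
          else Xn r (n - 1)) n := by
    rw [← Fin.sum_univ_eq_sum_range]
    exact Finset.sum_congr rfl fun k _ => rfl
  rw [key, Finset.range_eq_Ico,
    ← Finset.sum_Ico_consecutive _ (Nat.zero_le 1) (by omega : 1 ≤ r + 1),
    ← Finset.sum_Ico_consecutive _ (by omega : (1:ℕ) ≤ j) (by omega : j ≤ r + 1),
    ← Finset.sum_Ico_consecutive _ (by omega : j ≤ j + 1) (by omega : j + 1 ≤ r + 1),
    ← Finset.sum_Ico_consecutive _ (by omega : j + 1 ≤ j + 2) (by omega : j + 2 ≤ r + 1)]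
  have e0 : ∑ n ∈ Finset.Ico 0 1, (fun n : ℕ =>
      if n = 0 then Xn r 0 - sumXn r r
      else if n < j then Xn r n
      else if n = j then -(sumXn r j)
      else if n = j + 1 then sumXn r (j + 1)
      else Xn r (n - 1)) n = Xn r 0 - sumXn r r := by
    rw [show Finset.Ico 0 1 = {0} from rfl, Finset.sum_singleton, if_pos rfl]
  have e1 : ∑ n ∈ Finset.Ico 1 j, (fun n : ℕ =>
      if n = 0 then Xn r 0 - sumXn r r
      else if n < j then Xn r n
      else if n = j then -(sumXn r j)
      else if n = j + 1 then sumXn r (j + 1)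
      else Xn r (n - 1)) n = sumXn r j - sumXn r 1 := by
    rw [sumXn_sub_sumXn (by omega : 1 ≤ j)]
    refine Finset.sum_congr rfl fun n hn => ?_
    simp only [Finset.mem_Ico] at hn
    simp only
    rw [if_neg (by omega), if_pos (by omega)]
  have e2 : ∑ n ∈ Finset.Ico j (j + 1), (fun n : ℕ =>
      if n = 0 then Xn r 0 - sumXn r r
      else if n < j then Xn r n
      else if n = j then -(sumXn r j)
      else if n = j + 1 then sumXn r (j + 1)
      else Xn r (n - 1)) n = -(sumXn r j) := by
    rw [Nat.Ico_succ_singleton, Finset.sum_singleton]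
    simp only
    rw [if_neg (by omega), if_neg (by omega)]
    simp
  have e3 : ∑ n ∈ Finset.Ico (j + 1) (j + 2), (fun n : ℕ =>
      if n = 0 then Xn r 0 - sumXn r r
      else if n < j then Xn r n
      else if n = j then -(sumXn r j)
      else if n = j + 1 then sumXn r (j + 1)
      else Xn r (n - 1)) n = sumXn r (j + 1) := by
    rw [Nat.Ico_succ_singleton, Finset.sum_singleton]
    simp only
    rw [if_neg (by omega), if_neg (by omega), if_neg (by omega)]
    simp
  have e4 : ∑ n ∈ Finset.Ico (j + 2) (r + 1), (fun n : ℕ =>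
      if n = 0 then Xn r 0 - sumXn r r
      else if n < j then Xn r n
      else if n = j then -(sumXn r j)
      else if n = j + 1 then sumXn r (j + 1)
      else Xn r (n - 1)) n = sumXn r r - sumXn r (j + 1) := by
    have h1 : ∀ n ∈ Finset.Ico (j + 2) (r + 1), (fun n : ℕ =>
        if n = 0 then Xn r 0 - sumXn r r
        else if n < j then Xn r n
        else if n = j then -(sumXn r j)
        else if n = j + 1 then sumXn r (j + 1)
        else Xn r (n - 1)) n = Xn r (n - 1) := by
      intro n hn
      simp only [Finset.mem_Ico] at hn
      simp only
      rw [if_neg (by omega), if_neg (by omega), if_neg (by omega), if_neg (by omega)]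
    rw [Finset.sum_congr rfl h1, sumXn_sub_sumXn (by omega : j + 1 ≤ r),
      Finset.sum_Ico_eq_sum_range, Finset.sum_Ico_eq_sum_range]
    refine Finset.sum_congr (by congr 1; omega) fun k _ => by congr 1; omega
  rw [e0, e1, e2, e3, e4, sumXn_one (by omega)]
  ring

lemma val_natCast_fin (a : ℕ) : ((a : ℕ) : Fin (r + 1)).val = a % (r + 1) :=
  Fin.val_natCast a (r + 1)

lemma sum_argsOf {j t : ℕ} (hj : 1 ≤ j) (hjr : j + 1 ≤ r) :
    ∑ k : Fin r, argsOf r j t k = -(wordF r j ((t : ℕ) : Fin (r + 1))) := by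
  have h0 : ∑ k : Fin (r + 1), wordF r j (k + ((t : ℕ) : Fin (r + 1))) = 0 :=
    calc ∑ k : Fin (r + 1), wordF r j (k + ((t : ℕ) : Fin (r + 1)))
        = ∑ k : Fin (r + 1), wordF r j k :=
          Fintype.sum_equiv (Equiv.addRight ((t : ℕ) : Fin (r + 1))) _ _ (fun k => rfl)
      _ = 0 := sum_wordF hj hjr
  rw [Fin.sum_univ_succ] at h0
  have h1 : ∀ i : Fin r, wordF r j (i.succ + ((t : ℕ) : Fin (r + 1))) = argsOf r j t i := by
    intro i
    unfold argsOf
    congr 1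
    apply Fin.ext
    rw [Fin.add_def, val_natCast_fin, val_natCast_fin]
    show ((i.val + 1) + t % (r + 1)) % (r + 1) = (i.val + 1 + t) % (r + 1)
    rw [Nat.add_mod_mod]
  rw [Finset.sum_congr rfl (fun i _ => h1 i), zero_add] at h0
  exact eq_neg_of_add_eq_zero_right h0

end KVAux
namespace KVAux

open Finset
open Fin.NatCast

variable {r : ℕ}

lemma argsOf_zero {j : ℕ} (hj : 1 ≤ j) (hjr : j + 1 ≤ r) :
    argsOf r j 0 = fayArgs r j := by
  funext m
  have hm := m.isLt
  unfold argsOf wordF fayArgs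
  rw [show (((m.val + 1 + 0 : ℕ)) : Fin (r + 1)).val = m.val + 1 from by
    rw [val_natCast_fin, Nat.add_zero, Nat.mod_eq_of_lt (by omega)]]
  split_ifs <;> first | rfl | omega | (congr 1; omega) | simp_all

lemma fay_top (hr : 1 ≤ r) : fayArgs r r = pushInvArgs r := by
  funext m
  have hm := m.isLt
  unfold fayArgs pushInvArgs
  split_ifs <;> first | rfl | omega | (congr 1; omega)

lemma argsOf_step {j t : ℕ} (hj : 1 ≤ j) (hjr : j + 1 ≤ r) (m : Fin r) :
    aeval (R := ℚ) (argsOf r j t) (pushInvArgs r m) = argsOf r j (t + 1) m := by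
  have hm := m.isLt
  unfold pushInvArgs
  rcases eq_or_ne m.val (r - 1) with h | h
  · rw [if_pos h, map_neg, aeval_sumXn_full, sum_argsOf hj hjr, neg_neg]
    unfold argsOf
    congr 1
    apply Fin.ext
    rw [val_natCast_fin, val_natCast_fin,
      show m.val + 1 + (t + 1) = (r + 1) + t from by omega, Nat.add_mod_left]
  · rw [if_neg h, aeval_Xn_lt _ (by omega : m.val + 1 < r)]
    unfold argsOf
    congr 1
    apply Fin.ext
    rw [val_natCast_fin, val_natCast_fin]
    congr 1
    simp only [Fin.val_mk]
    omega

lemma args_chain {Mr : MFrac r} (hPi : msubst (pushInvArgs r) Mr = Mr)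
    {j : ℕ} (hj : 1 ≤ j) (hjr : j + 1 ≤ r) :
    ∀ t, msubst (argsOf r j t) Mr = msubst (fayArgs r j) Mr ∧ LInj (argsOf r j t) := by
  intro t
  induction t with
  | zero =>
    rw [argsOf_zero hj hjr]
    exact ⟨rfl, linj_fay hj (by omega)⟩
  | succ t ih =>
    have hfam : (fun m => aeval (R := ℚ) (argsOf r j t) (pushInvArgs r m))
        = argsOf r j (t + 1) := funext (argsOf_step hj hjr)
    constructor
    · rw [← hfam, ← unrot_step ih.2 hPi]
      exact ih.1
    · have := (linj_pushInv (r := r)).comp ih.2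
      rwa [hfam] at this

lemma w3 {i : ℕ} (hi : 1 ≤ i) (hir : i ≤ r - 1) (hr : 2 ≤ r) (m : Fin r) :
    aeval (R := ℚ) (sigmaArgs r) (aeval (R := ℚ) (rotIdx r i) (swapArgs r m))
      = argsOf r (r - i) (r - i) m := by
  have hm := m.isLt
  have hr0 : 0 < r := by omega
  unfold swapArgs
  rw [map_sub, map_sub]
  have t1 : aeval (R := ℚ) (sigmaArgs r) (aeval (R := ℚ) (rotIdx r i) (Xn r (r - 1 - m.val)))
      = sumXn r (r - (r - 1 - m.val + i) % r) := by
    rw [aeval_Xn_lt _ (by omega : r - 1 - m.val < r)]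
    show aeval (R := ℚ) (sigmaArgs r) (Xn r ((r - 1 - m.val + i) % r)) = _
    rw [aeval_Xn_lt _ (Nat.mod_lt _ hr0)]
    rfl
  rw [t1]
  rcases eq_or_ne m.val 0 with h0 | h0
  · -- m = 0
    rw [h0]
    simp only [Nat.sub_zero]
    rw [Xn_of_ge (le_refl r), map_zero, map_zero, sub_zero]
    have e : (r - 1 + i) % r = i - 1 := by
      rw [Nat.mod_eq_sub_mod (by omega), show r - 1 + i - r = i - 1 from by omega]
      exact Nat.mod_eq_of_lt (by omega)
    rw [e]
    unfold argsOf wordF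
    rw [show (((m.val + 1 + (r - i) : ℕ)) : Fin (r + 1)).val = r - i + 1 from by
      rw [val_natCast_fin, Nat.mod_eq_of_lt (by omega)]; omega]
    rw [if_neg (by omega), if_neg (by omega), if_neg (by omega), if_pos rfl]
    congr 1
    omega
  · -- m ≥ 1
    have t2 : aeval (R := ℚ) (sigmaArgs r) (aeval (R := ℚ) (rotIdx r i) (Xn r (r - m.val)))
        = sumXn r (r - (r - m.val + i) % r) := by
      rw [aeval_Xn_lt _ (by omega : r - m.val < r)]
      show aeval (R := ℚ) (sigmaArgs r) (Xn r ((r - m.val + i) % r)) = _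
      rw [aeval_Xn_lt _ (Nat.mod_lt _ hr0)]
      rfl
    rw [t2]
    rcases Nat.lt_or_ge m.val i with hlt | hge
    · -- 1 ≤ m < i
      have e1 : (r - 1 - m.val + i) % r = i - 1 - m.val := by
        rw [Nat.mod_eq_sub_mod (by omega),
          show r - 1 - m.val + i - r = i - 1 - m.val from by omega]
        exact Nat.mod_eq_of_lt (by omega)
      have e2 : (r - m.val + i) % r = i - m.val := by
        rw [Nat.mod_eq_sub_mod (by omega),
          show r - m.val + i - r = i - m.val from by omega]
        exact Nat.mod_eq_of_lt (by omega)
      rw [e1, e2]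
      unfold argsOf wordF
      rw [show (((m.val + 1 + (r - i) : ℕ)) : Fin (r + 1)).val = m.val + 1 + (r - i) from by
        rw [val_natCast_fin]; exact Nat.mod_eq_of_lt (by omega)]
      rw [if_neg (by omega), if_neg (by omega), if_neg (by omega), if_neg (by omega)]
      rw [show r - (i - 1 - m.val) = (r - i + m.val) + 1 from by omega,
        show r - (i - m.val) = r - i + m.val from by omega, ← Xn_eq_sub]
      congr 1
      omega
    rcases Nat.eq_or_lt_of_le hge with heq | hgt
    · -- m = i
      have e1 : (r - 1 - m.val + i) % r = r - 1 := by
        rw [show r - 1 - m.val + i = r - 1 from by omega]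
        exact Nat.mod_eq_of_lt (by omega)
      have e2 : (r - m.val + i) % r = 0 := by
        rw [show r - m.val + i = r from by omega]
        exact Nat.mod_self r
      rw [e1, e2, show r - (r - 1) = 1 from by omega, Nat.sub_zero,
        sumXn_one (by omega)]
      unfold argsOf wordF
      rw [show (((m.val + 1 + (r - i) : ℕ)) : Fin (r + 1)).val = 0 from by
        rw [val_natCast_fin, show m.val + 1 + (r - i) = r + 1 from by omega]
        exact Nat.mod_self (r + 1)]
      rw [if_pos rfl]
    · -- m > i
      have e1 : (r - 1 - m.val + i) % r = r - 1 - m.val + i :=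
        Nat.mod_eq_of_lt (by omega)
      have e2 : (r - m.val + i) % r = r - m.val + i :=
        Nat.mod_eq_of_lt (by omega)
      rw [e1, e2]
      unfold argsOf wordF
      rw [show (((m.val + 1 + (r - i) : ℕ)) : Fin (r + 1)).val = m.val - i from by
        rw [val_natCast_fin, Nat.mod_eq_sub_mod (by omega),
          show m.val + 1 + (r - i) - (r + 1) = m.val - i from by omega]
        exact Nat.mod_eq_of_lt (by omega)]
      rw [if_neg (by omega), if_pos (by omega)]
      rw [show r - (r - 1 - m.val + i) = (m.val - i) + 1 from by omega,
        show r - (r - m.val + i) = m.val - i from by omega, ← Xn_eq_sub]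

end KVAux
namespace KVAux

open Finset
open Fin.NatCast

variable {r : ℕ}

lemma toF_inj : Function.Injective (toF (r := r)) :=
  IsFractionRing.injective (MPoly r) (MFrac r)

lemma toF_ne_zero {p : MPoly r} (hp : p ≠ 0) : toF p ≠ 0 := by
  intro h
  exact hp (toF_inj (by rw [h]; exact (map_zero _).symm))

lemma eval_one_sumXn {n : ℕ} (hn : n ≤ r) :
    MvPolynomial.eval (fun _ : Fin r => (1 : ℚ)) (sumXn r n) = n := by
  unfold sumXn
  rw [map_sum]
  have h1 : ∀ k ∈ Finset.range n, MvPolynomial.eval (fun _ : Fin r => (1 : ℚ)) (Xn r k)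
      = 1 := by
    intro k hk
    simp only [Finset.mem_range] at hk
    unfold Xn
    rw [dif_pos (by omega)]
    simp
  rw [Finset.sum_congr rfl h1, Finset.sum_const, Finset.card_range, nsmul_eq_mul, mul_one]

lemma sumXn_ne_zero (hr : 1 ≤ r) : sumXn r r ≠ 0 := by
  intro h
  have := congrArg (MvPolynomial.eval (fun _ : Fin r => (1 : ℚ))) h
  rw [eval_one_sumXn le_rfl, map_zero] at this
  have : r = 0 := by exact_mod_cast this
  omega

lemma sumXn_sub_X0_ne_zero (hr : 2 ≤ r) : sumXn r r - Xn r 0 ≠ 0 := by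
  intro h
  have := congrArg (MvPolynomial.eval (fun _ : Fin r => (1 : ℚ))) h
  rw [map_sub, map_zero, eval_one_sumXn le_rfl] at this
  have h2 : MvPolynomial.eval (fun _ : Fin r => (1 : ℚ)) (Xn r 0) = 1 := by
    unfold Xn; rw [dif_pos (by omega)]; simp
  rw [h2] at this
  have h3 : (r : ℚ) = 1 := by linarith
  have : r = 1 := by exact_mod_cast h3
  omega

lemma prodXn_ne_zero : (∏ k ∈ Finset.range r, Xn r k) ≠ 0 := by
  refine Finset.prod_ne_zero_iff.mpr fun k hk => ?_
  simp only [Finset.mem_range] at hk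
  unfold Xn
  rw [dif_pos hk]
  exact MvPolynomial.X_ne_zero _

lemma toF_mul (p q : MPoly r) : toF (p * q) = toF p * toF q := map_mul _ p q

lemma darInv_eq (A : Mould) (hr : 1 ≤ r) :
    darInv A r = toF (sumXn r r) * deltaInv A r := by
  show A r / toF (∏ k ∈ Finset.range r, Xn r k)
      = toF (sumXn r r) * (A r / toF ((∏ k ∈ Finset.range r, Xn r k) * sumXn r r))
  rw [toF_mul]
  have h1 : toF (∏ k ∈ Finset.range r, Xn r k) ≠ 0 := toF_ne_zero prodXn_ne_zero
  have h2 : toF (sumXn r r) ≠ 0 := toF_ne_zero (sumXn_ne_zero hr)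
  field_simp

lemma msubst_const {s : ℕ} {ℓ : Fin s → MPoly r} (h : LInj ℓ) (q : ℚ) :
    msubst ℓ (constF s q) = constF r q := by
  rw [constF, msubst_toF h, MvPolynomial.aeval_C, constF]
  rfl

lemma sum_range_split {M : Type*} [AddCommMonoid M] (hr : 1 ≤ r) (f : ℕ → M) :
    ∑ i ∈ Finset.range r, f i = f 0 + ∑ k ∈ Finset.range (r - 1), f (1 + k) := by
  obtain ⟨r', rfl⟩ : ∃ r', r = r' + 1 := ⟨r - 1, by omega⟩
  rw [Finset.sum_range_succ', Nat.add_sub_cancel, add_comm]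
  exact congrArg _ (Finset.sum_congr rfl fun k _ => by rw [Nat.add_comm])

lemma sum_Icc_split {M : Type*} [AddCommMonoid M] (hr : 1 ≤ r) (f : ℕ → M) :
    ∑ i ∈ Finset.Icc 1 r, f i = (∑ i ∈ Finset.Icc 1 (r - 1), f i) + f r := by
  obtain ⟨r', rfl⟩ : ∃ r', r = r' + 1 := ⟨r - 1, by omega⟩
  rw [Nat.add_sub_cancel, Finset.sum_Icc_succ_top (by omega)]

lemma sum_Icc_eq_range {M : Type*} [AddCommMonoid M] (hr : 1 ≤ r) (f : ℕ → M) :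
    ∑ i ∈ Finset.Icc 1 (r - 1), f i = ∑ k ∈ Finset.range (r - 1), f (1 + k) := by
  rw [show Finset.Icc 1 (r - 1) = Finset.Ico 1 r from by
      rw [← Finset.Ico_add_one_right_eq_Icc]; congr 1; omega,
    Finset.sum_Ico_eq_sum_range]

lemma sum_fay_args {i : ℕ} (h1 : 1 ≤ i) (h2 : i + 1 ≤ r) :
    (∑ k : Fin r, fayArgs r i k) = sumXn r r - Xn r 0 := by
  have hs := sum_argsOf (j := i) (t := 0) h1 h2
  rw [argsOf_zero h1 h2] at hs
  rw [hs, Nat.cast_zero]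
  unfold wordF
  rw [show ((0 : Fin (r + 1))).val = 0 from rfl, if_pos rfl]
  ring

lemma depth_equiv (A : Mould) (hP : PushInvariant (deltaInv A)) {r : ℕ} (hr : 2 ≤ r) (c : ℚ) :
    ((∑ i ∈ Finset.range r, (circM^[i] (swapM (deltaInv A))) r) = constF r (-(r : ℚ) * c))
      ↔ Fay (darInv A) r = constF r (-(r : ℚ) * c) * toF (sumXn r r - Xn r 0) := by
  have hPr : msubst (pushArgs r) (deltaInv A r) = deltaInv A r := hP r (by omega)
  have hPi : msubst (pushInvArgs r) (deltaInv A r) = deltaInv A r := msubst_pushInv_eq hPr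
  set Mr := deltaInv A r with hMr
  set G : MFrac r := Mr + ∑ j ∈ Finset.Icc 1 (r - 1), msubst (fayArgs r j) Mr with hG
  -- Step A : applying the (invertible) substitution σ to the circ-sum yields G
  have stepA : msubst (sigmaArgs r)
      (∑ i ∈ Finset.range r, (circM^[i] (swapM (deltaInv A))) r) = G := by
    rw [msubst_sum linj_sigma]
    have term0 : msubst (sigmaArgs r) ((circM^[0] (swapM (deltaInv A))) r) = Mr := by
      rw [Function.iterate_zero, id_eq]
      show msubst (sigmaArgs r) (msubst (swapArgs r) Mr) = Mr
      rw [msubst_msubst linj_swap linj_sigma,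
        show (fun m => aeval (R := ℚ) (sigmaArgs r) (swapArgs r m))
          = fun m : Fin r => (X m : MPoly r) from funext retract_swap, msubst_X]
    have termi : ∀ i, 1 ≤ i → i ≤ r - 1 →
        msubst (sigmaArgs r) ((circM^[i] (swapM (deltaInv A))) r)
          = msubst (fayArgs r (r - i)) Mr := by
      intro i hi1 hi2
      obtain ⟨hc, hcl⟩ := circ_iter (swapM (deltaInv A)) i (r := r)
      rw [hc]
      have e1 : msubst (rotIdx r i) (msubst (swapArgs r) Mr)
          = msubst (fun m => aeval (R := ℚ) (rotIdx r i) (swapArgs r m)) Mr :=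
        msubst_msubst linj_swap hcl Mr
      have e2 : msubst (sigmaArgs r)
          (msubst (fun m => aeval (R := ℚ) (rotIdx r i) (swapArgs r m)) Mr)
          = msubst (fun m => aeval (R := ℚ) (sigmaArgs r)
              (aeval (R := ℚ) (rotIdx r i) (swapArgs r m))) Mr :=
        msubst_msubst (linj_swap.comp hcl) linj_sigma Mr
      have e3 : (fun m => aeval (R := ℚ) (sigmaArgs r)
          (aeval (R := ℚ) (rotIdx r i) (swapArgs r m))) = argsOf r (r - i) (r - i) :=
        by funext m; exact w3 hi1 hi2 hr m
      show msubst (sigmaArgs r) (msubst (rotIdx r i) (msubst (swapArgs r) Mr))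
          = msubst (fayArgs r (r - i)) Mr
      rw [e1, e2, e3]
      exact (args_chain hPi (by omega) (by omega) (r - i)).1
    rw [sum_range_split (by omega), term0, hG]
    congr 1
    rw [sum_Icc_eq_range (by omega)]
    have hre : ∀ k ∈ Finset.range (r - 1),
        msubst (sigmaArgs r) ((circM^[1 + k] (swapM (deltaInv A))) r)
          = msubst (fayArgs r (r - (1 + k))) Mr := fun k hk => by
      have hk' := Finset.mem_range.mp hk
      exact termi (1 + k) (by omega) (by omega)
    rw [Finset.sum_congr rfl hre]
    have hswap : ∀ k ∈ Finset.range (r - 1),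
        msubst (fayArgs r (r - (1 + k))) Mr
          = msubst (fayArgs r (1 + (r - 1 - 1 - k))) Mr := by
      intro k hk
      have hk' := Finset.mem_range.mp hk
      have : r - (1 + k) = 1 + (r - 1 - 1 - k) := by omega
      rw [this]
    rw [Finset.sum_congr rfl hswap]
    exact Finset.sum_range_reflect (fun n => msubst (fayArgs r (1 + n)) Mr) (r - 1)
  -- Step B : the Fay sum factors through G
  have hdar : darInv A r = toF (sumXn r r) * Mr := darInv_eq A (by omega)
  have stepB : Fay (darInv A) r = toF (sumXn r r - Xn r 0) * G := by
    show darInv A r + ∑ i ∈ Finset.Icc 1 r, msubst (fayArgs r i) (darInv A r)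
        = toF (sumXn r r - Xn r 0) * G
    rw [hdar]
    have hterm : ∀ i, 1 ≤ i → i ≤ r →
        msubst (fayArgs r i) (toF (sumXn r r) * Mr)
          = toF (∑ k : Fin r, fayArgs r i k) * msubst (fayArgs r i) Mr := by
      intro i hi1 hi2
      rw [msubst_mul (linj_fay hi1 hi2), msubst_toF (linj_fay hi1 hi2), aeval_sumXn_full]
    rw [sum_Icc_split (by omega)]
    have hmid : ∀ i ∈ Finset.Icc 1 (r - 1),
        msubst (fayArgs r i) (toF (sumXn r r) * Mr)
          = toF (sumXn r r - Xn r 0) * msubst (fayArgs r i) Mr := by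
      intro i hi
      simp only [Finset.mem_Icc] at hi
      rw [hterm i (by omega) (by omega), sum_fay_args (by omega) (by omega)]
    have htop : msubst (fayArgs r r) (toF (sumXn r r) * Mr) = toF (-(Xn r 0)) * Mr := by
      rw [hterm r (by omega) le_rfl,
        show (∑ k : Fin r, fayArgs r r k) = -(Xn r 0) from by
          rw [show fayArgs r r = pushInvArgs r from fay_top (by omega)]
          exact sum_pushInvArgs (by omega),
        show msubst (fayArgs r r) Mr = Mr from by
          rw [show fayArgs r r = pushInvArgs r from fay_top (by omega)]; exact hPi]
    rw [Finset.sum_congr rfl hmid, htop, hG, mul_add, Finset.mul_sum]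
    rw [show toF (sumXn r r - Xn r 0) = toF (sumXn r r) - toF (Xn r 0) from map_sub _ _ _,
      show toF (-(Xn r 0)) = -(toF (Xn r 0)) from map_neg _ _]
    ring
  constructor
  · intro h
    have hGc : G = constF r (-(r : ℚ) * c) := by
      rw [← stepA, h, msubst_const linj_sigma]
    rw [stepB, hGc]
    ring
  · intro h
    apply msubst_injective linj_sigma
    have hne : toF (sumXn r r - Xn r 0) ≠ 0 := toF_ne_zero (sumXn_sub_X0_ne_zero hr)
    have hGc : G = constF r (-(r : ℚ) * c) := by
      apply mul_left_cancel₀ hne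
      rw [← stepB, h]
      ring
    rw [stepA, hGc, msubst_const linj_sigma]

end KVAux


open KVAux

/-- **Corollary of Theorem 1.3 (Theorem A).** The set of polynomial moulds
`F ∈ ARI` such that `M := Δ⁻¹F` is alternal and push-invariant and `swap M + C`
is circ-neutral for some constant mould `C` (the defining conditions of
`krv_ell`) coincides with the set of polynomial moulds `F ∈ ARI` such that
`M := Δ⁻¹F` is alternal and push-invariant and
`ℱ(dar⁻¹F)(u_1,…,u_r) = −r·c_r·(u_2+⋯+u_r)` for all `r ≥ 2`, for some constant
mould `C`; moreover for a given `F` the same constant mould `C` works in both. -/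
theorem corollary_of_theorem_1_3 :
    (∀ A : Mould, A 0 = 0 → IsPolynomialMould A →
      ((Alternal (deltaInv A) ∧ PushInvariant (deltaInv A) ∧ ∃ C : ℕ → ℚ, CondA A C) ↔
        (Alternal (deltaInv A) ∧ PushInvariant (deltaInv A) ∧ ∃ C : ℕ → ℚ, CondB A C))) ∧
    (∀ A : Mould, A 0 = 0 → IsPolynomialMould A → ∀ C : ℕ → ℚ,
      ((Alternal (deltaInv A) ∧ PushInvariant (deltaInv A) ∧ CondA A C) ↔
        (Alternal (deltaInv A) ∧ PushInvariant (deltaInv A) ∧ CondB A C))) := by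
  have main : ∀ A : Mould, ∀ C : ℕ → ℚ, PushInvariant (deltaInv A) →
      (CondA A C ↔ CondB A C) := by
    intro A C hP
    constructor
    · intro h r hr
      exact (depth_equiv A hP hr (C r)).mp (h r hr)
    · intro h r hr
      exact (depth_equiv A hP hr (C r)).mpr (h r hr)
  constructor
  · intro A _ _
    constructor
    · rintro ⟨ha, hp, C, hC⟩
      exact ⟨ha, hp, C, (main A C hp).mp hC⟩
    · rintro ⟨ha, hp, C, hC⟩
      exact ⟨ha, hp, C, (main A C hp).mpr hC⟩
  · intro A _ _ C
    constructor
    · rintro ⟨ha, hp, hC⟩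
      exact ⟨ha, hp, (main A C hp).mp hC⟩
    · rintro ⟨ha, hp, hC⟩
      exact ⟨ha, hp, (main A C hp).mpr hC⟩

end
end

section
/- Depth-2 Fay correction of the exponential (§3.3): Let Q ∈ ARI and let E := exp_mu(Q). Then ℱ(E)(u_1,u_2) = ℱ(Q)(u_1,u_2) + (1/2)·( E(u_1)·E(u_2) + E(−u_1)·E(u_1+u_2) + E(u_2)·E(−u_1−u_2) ). -/
/-!
Moulds over ℚ: a mould is a family `A = (A_r)_{r ≥ 0}` where `A_r` lies in the
field `ℚ(u_1, …, u_r)` of rational functions in `r` commuting variables,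
realized here as the fraction field of `MvPolynomial (Fin r) ℚ`.
Substitution of ℚ-linearly independent linear forms is realized by lifting the
corresponding (injective) polynomial substitution map to the fraction fields.
-/

noncomputable section

/-! ### Auxiliary lemmas -/

section Aux

open MvPolynomial

variable {s r t : ℕ}

/-- A "section" hypothesis implying injectivity of the substitution map. -/
def IsSect (ℓ : Fin s → MPoly r) (g : Fin r → MPoly s) : Prop :=
  ∀ m, MvPolynomial.aeval g (ℓ m) = MvPolynomial.X m

lemma aeval_aeval {a b c : ℕ} (f : Fin b → MPoly c) (e : Fin a → MPoly b) (p : MPoly a) :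
    MvPolynomial.aeval (R := ℚ) f (MvPolynomial.aeval (R := ℚ) e p)
      = MvPolynomial.aeval (R := ℚ) (fun i => MvPolynomial.aeval (R := ℚ) f (e i)) p := by
  have : (MvPolynomial.aeval (R := ℚ) f).comp (MvPolynomial.aeval (R := ℚ) e)
      = MvPolynomial.aeval (R := ℚ) (fun i => MvPolynomial.aeval (R := ℚ) f (e i)) := by
    apply MvPolynomial.algHom_ext; intro i; simp
  exact congrArg (fun F : MPoly a →ₐ[ℚ] MPoly c => F p) this

lemma sect_apply {ℓ : Fin s → MPoly r} {g : Fin r → MPoly s} (h : IsSect ℓ g)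
    (p : MPoly s) : MvPolynomial.aeval (R := ℚ) g (MvPolynomial.aeval (R := ℚ) ℓ p) = p := by
  rw [aeval_aeval]
  have : (fun i => MvPolynomial.aeval (R := ℚ) g (ℓ i)) = MvPolynomial.X :=
    funext fun i => by rw [h i]
  rw [this, MvPolynomial.aeval_X_left_apply]

lemma subst_inj {ℓ : Fin s → MPoly r} {g : Fin r → MPoly s} (h : IsSect ℓ g) :
    Function.Injective ((algebraMap (MPoly r) (MFrac r)).comp
      (MvPolynomial.aeval (R := ℚ) ℓ).toRingHom) := by
  intro a b hab
  have h1 : MvPolynomial.aeval (R := ℚ) ℓ a = MvPolynomial.aeval (R := ℚ) ℓ b := by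
    apply IsFractionRing.injective (MPoly r) (MFrac r)
    simpa only [RingHom.comp_apply, AlgHom.toRingHom_eq_coe, RingHom.coe_coe] using hab
  have h2 := congrArg (MvPolynomial.aeval (R := ℚ) g) h1
  rwa [sect_apply h, sect_apply h] at h2

lemma msubst_eq {ℓ : Fin s → MPoly r} {g : Fin r → MPoly s} (h : IsSect ℓ g) :
    msubst ℓ = ⇑(IsFractionRing.lift (subst_inj h)) := by
  funext A
  unfold msubst
  rw [dif_pos (subst_inj h)]

lemma msubst_zero (ℓ : Fin s → MPoly r) : msubst ℓ 0 = 0 := by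
  unfold msubst
  split <;> simp

lemma msubst_add {ℓ : Fin s → MPoly r} {g : Fin r → MPoly s} (h : IsSect ℓ g)
    (A B : MFrac s) : msubst ℓ (A + B) = msubst ℓ A + msubst ℓ B := by
  rw [msubst_eq h]; exact map_add _ _ _

lemma msubst_mul {ℓ : Fin s → MPoly r} {g : Fin r → MPoly s} (h : IsSect ℓ g)
    (A B : MFrac s) : msubst ℓ (A * B) = msubst ℓ A * msubst ℓ B := by
  rw [msubst_eq h]; exact map_mul _ _ _

lemma msubst_one {ℓ : Fin s → MPoly r} {g : Fin r → MPoly s} (h : IsSect ℓ g) :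
    msubst ℓ 1 = 1 := by
  rw [msubst_eq h]; exact map_one _

lemma msubst_toF {ℓ : Fin s → MPoly r} {g : Fin r → MPoly s} (h : IsSect ℓ g)
    (p : MPoly s) : msubst ℓ (toF p) = toF (MvPolynomial.aeval ℓ p) := by
  rw [msubst_eq h]
  exact IsFractionRing.lift_algebraMap (subst_inj h) p

lemma msubst_constF {ℓ : Fin s → MPoly r} {g : Fin r → MPoly s} (h : IsSect ℓ g)
    (q : ℚ) : msubst ℓ (constF s q) = constF r q := by
  rw [constF, msubst_toF h]
  simp [constF, toF]

lemma msubst_id {ℓ : Fin r → MPoly r} (h : ∀ m, ℓ m = MvPolynomial.X m)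
    (A : MFrac r) : msubst ℓ A = A := by
  have hs : IsSect ℓ ℓ := fun m => by rw [h m]; simp [h m]
  rw [msubst_eq hs]
  have he : (IsFractionRing.lift (subst_inj hs)) = RingHom.id (MFrac r) := by
    apply IsLocalization.ringHom_ext (nonZeroDivisors (MPoly r))
    refine RingHom.ext fun p => ?_
    simp only [RingHom.comp_apply, RingHom.id_apply]
    rw [IsFractionRing.lift_algebraMap]
    have hp : MvPolynomial.aeval (R := ℚ) ℓ p = p := by
      rw [show ℓ = MvPolynomial.X from funext h, MvPolynomial.aeval_X_left_apply]
    simp only [AlgHom.toRingHom_eq_coe, RingHom.comp_apply, RingHom.coe_coe, hp]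
  rw [he, RingHom.id_apply]

set_option maxHeartbeats 2000000 in
lemma msubst_comp {ℓ : Fin s → MPoly r} {g : Fin r → MPoly s} (h : IsSect ℓ g)
    {ℓ' : Fin t → MPoly s} {g' : Fin s → MPoly t} (h' : IsSect ℓ' g')
    (A : MFrac t) :
    msubst ℓ (msubst ℓ' A) = msubst (fun m => MvPolynomial.aeval ℓ (ℓ' m)) A := by
  have hc : IsSect (fun m => MvPolynomial.aeval (R := ℚ) ℓ (ℓ' m))
      (fun k => MvPolynomial.aeval (R := ℚ) g' (g k)) := by
    intro m
    rw [aeval_aeval]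
    have e1 : (fun i : Fin s => MvPolynomial.aeval (R := ℚ)
        (fun k => MvPolynomial.aeval (R := ℚ) g' (g k)) (ℓ i)) = g' := by
      funext i
      rw [← aeval_aeval g' g (ℓ i), h i, MvPolynomial.aeval_X]
    rw [e1]
    exact h' m
  rw [msubst_eq h, msubst_eq h', msubst_eq hc]
  have he : (IsFractionRing.lift (subst_inj h)).comp (IsFractionRing.lift (subst_inj h'))
      = (IsFractionRing.lift (subst_inj hc) : MFrac t →+* MFrac r) := by
    apply IsLocalization.ringHom_ext (nonZeroDivisors (MPoly t))
    refine RingHom.ext fun p => ?_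
    simp only [RingHom.comp_apply]
    rw [IsFractionRing.lift_algebraMap, IsFractionRing.lift_algebraMap]
    simp only [AlgHom.toRingHom_eq_coe, RingHom.comp_apply, RingHom.coe_coe]
    rw [IsFractionRing.lift_algebraMap]
    simp only [AlgHom.toRingHom_eq_coe, RingHom.comp_apply, RingHom.coe_coe]
    rw [aeval_aeval]
  calc (IsFractionRing.lift (subst_inj h)) ((IsFractionRing.lift (subst_inj h')) A)
      = ((IsFractionRing.lift (subst_inj h)).comp (IsFractionRing.lift (subst_inj h'))) A := rfl
    _ = (IsFractionRing.lift (subst_inj hc)) A := by rw [he]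

end Aux


/-! ### Depth-specific computations -/

section Main

open MvPolynomial Finset

lemma sect0 {r : ℕ} (ℓ : Fin 0 → MPoly r) : IsSect ℓ (fun _ => 0) := fun m => m.elim0

lemma Xn_eq {r k : ℕ} (h : k < r) : Xn r k = MvPolynomial.X ⟨k, h⟩ := by
  simp [Xn, h]

lemma segArgs_id {r : ℕ} (m : Fin r) : segArgs r 0 m = MvPolynomial.X m := by
  simp [segArgs, Xn_eq m.isLt]

lemma oneMould_zero : oneMould 0 = (1 : MFrac 0) := rfl

lemma oneMould_pos {r : ℕ} (h : r ≠ 0) : oneMould r = 0 := by simp [oneMould, h]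

lemma constF_one (r : ℕ) : constF r 1 = 1 := by simp [constF, toF]

-- the canonical depth-1-into-depth-2 argument lists
lemma segArgs20 : (segArgs 2 0 : Fin 1 → MPoly 2) = fun _ => Xn 2 0 := by
  funext m
  have : m = 0 := Subsingleton.elim m 0
  simp [segArgs, this]

lemma segArgs21 : (segArgs 2 1 : Fin 1 → MPoly 2) = fun _ => Xn 2 1 := by
  funext m
  have : m = 0 := Subsingleton.elim m 0
  simp [segArgs, this]

lemma sect_e0 : IsSect (fun _ : Fin 1 => Xn 2 0) (fun _ => MvPolynomial.X 0) := by
  intro m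
  have : m = 0 := Subsingleton.elim m 0
  simp [this, Xn_eq (show 0 < 2 by norm_num)]

lemma sect_e1 : IsSect (fun _ : Fin 1 => Xn 2 1) (fun _ => MvPolynomial.X 0) := by
  intro m
  have : m = 0 := Subsingleton.elim m 0
  simp [this, Xn_eq (show 1 < 2 by norm_num)]

lemma sect_m0 : IsSect (fun _ : Fin 1 => -(Xn 2 0)) (fun _ => -(MvPolynomial.X 0)) := by
  intro m
  have : m = 0 := Subsingleton.elim m 0
  simp [this, Xn_eq (show 0 < 2 by norm_num)]

lemma sect_s01 : IsSect (fun _ : Fin 1 => Xn 2 0 + Xn 2 1)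
    (fun k : Fin 2 => if k.val = 0 then MvPolynomial.X 0 else 0) := by
  intro m
  have : m = 0 := Subsingleton.elim m 0
  simp [this, Xn_eq (show 0 < 2 by norm_num), Xn_eq (show 1 < 2 by norm_num)]

lemma sect_ms01 : IsSect (fun _ : Fin 1 => -(Xn 2 0 + Xn 2 1))
    (fun k : Fin 2 => if k.val = 0 then -(MvPolynomial.X 0) else 0) := by
  intro m
  have : m = 0 := Subsingleton.elim m 0
  simp [this, Xn_eq (show 0 < 2 by norm_num), Xn_eq (show 1 < 2 by norm_num)]

-- the Fay argument lists in depth 2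
lemma fayArgs21_vals : (fayArgs 2 1 : Fin 2 → MPoly 2)
    = fun m => if m.val = 0 then -(Xn 2 0) else Xn 2 0 + Xn 2 1 := by
  funext m
  fin_cases m <;> simp [fayArgs, sumXn, Finset.sum_range_succ]

lemma fayArgs22_vals : (fayArgs 2 2 : Fin 2 → MPoly 2)
    = fun m => if m.val = 0 then Xn 2 1 else -(Xn 2 0 + Xn 2 1) := by
  funext m
  fin_cases m <;> simp [fayArgs, sumXn, Finset.sum_range_succ]

lemma sect_F1 : IsSect (fayArgs 2 1 : Fin 2 → MPoly 2)
    (fun k : Fin 2 => if k.val = 0 then -(MvPolynomial.X 0)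
      else MvPolynomial.X 0 + MvPolynomial.X 1) := by
  rw [fayArgs21_vals]
  intro m
  fin_cases m <;>
    simp [Xn_eq (show 0 < 2 by norm_num), Xn_eq (show 1 < 2 by norm_num)] <;>
    ring_nf <;> rfl

lemma sect_F2 : IsSect (fayArgs 2 2 : Fin 2 → MPoly 2)
    (fun k : Fin 2 => if k.val = 0 then -(MvPolynomial.X 0) - MvPolynomial.X 1
      else MvPolynomial.X 0) := by
  rw [fayArgs22_vals]
  intro m
  fin_cases m <;>
    simp [Xn_eq (show 0 < 2 by norm_num), Xn_eq (show 1 < 2 by norm_num)] <;>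
    ring_nf <;> rfl

lemma muPow_one_zero (Q : Mould) (hQ0 : Q 0 = 0) : muPow Q 1 0 = 0 := by
  show muM oneMould Q 0 = 0
  simp [muM, hQ0, msubst_zero]

lemma muPow_one_one (Q : Mould) (hQ0 : Q 0 = 0) : muPow Q 1 1 = Q 1 := by
  show muM oneMould Q 1 = Q 1
  rw [muM]
  rw [Finset.sum_range_succ, Finset.sum_range_succ, Finset.sum_range_zero]
  rw [show oneMould 1 = 0 from oneMould_pos one_ne_zero, msubst_zero, hQ0, msubst_zero]
  rw [show oneMould 0 = (1 : MFrac 0) from rfl, msubst_one (sect0 _)]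
  rw [msubst_id segArgs_id]
  ring

lemma muPow_one_two (Q : Mould) (hQ0 : Q 0 = 0) : muPow Q 1 2 = Q 2 := by
  show muM oneMould Q 2 = Q 2
  rw [muM]
  rw [Finset.sum_range_succ, Finset.sum_range_succ, Finset.sum_range_succ,
    Finset.sum_range_zero]
  rw [show oneMould 1 = 0 from oneMould_pos one_ne_zero,
    show oneMould 2 = 0 from oneMould_pos two_ne_zero, msubst_zero, msubst_zero]
  rw [show oneMould 0 = (1 : MFrac 0) from rfl, msubst_one (sect0 _)]
  rw [msubst_id segArgs_id]
  ring

lemma muPow_two_two (Q : Mould) (hQ0 : Q 0 = 0) :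
    muPow Q 2 2 = msubst (fun _ : Fin 1 => Xn 2 0) (Q 1)
      * msubst (fun _ : Fin 1 => Xn 2 1) (Q 1) := by
  show muM (muPow Q 1) Q 2 = _
  rw [muM]
  rw [Finset.sum_range_succ, Finset.sum_range_succ, Finset.sum_range_succ,
    Finset.sum_range_zero]
  rw [muPow_one_zero Q hQ0, msubst_zero, hQ0, msubst_zero]
  rw [muPow_one_one Q hQ0]
  rw [segArgs20, segArgs21]
  ring

lemma expMu_one (Q : Mould) (hQ0 : Q 0 = 0) : expMu Q 1 = Q 1 := by
  rw [expMu]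
  rw [Finset.sum_range_succ, Finset.sum_range_succ, Finset.sum_range_zero]
  rw [show muPow Q 0 1 = 0 from oneMould_pos one_ne_zero, muPow_one_one Q hQ0]
  norm_num [constF_one]

lemma expMu_two (Q : Mould) (hQ0 : Q 0 = 0) :
    expMu Q 2 = Q 2 + constF 2 (1 / 2) *
      (msubst (fun _ : Fin 1 => Xn 2 0) (Q 1)
        * msubst (fun _ : Fin 1 => Xn 2 1) (Q 1)) := by
  rw [expMu]
  rw [Finset.sum_range_succ, Finset.sum_range_succ, Finset.sum_range_succ,
    Finset.sum_range_zero]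
  rw [show muPow Q 0 2 = 0 from oneMould_pos two_ne_zero, muPow_one_two Q hQ0,
    muPow_two_two Q hQ0]
  norm_num [constF_one]

lemma fay_two (A : Mould) : Fay A 2 = A 2 + msubst (fayArgs 2 1) (A 2)
    + msubst (fayArgs 2 2) (A 2) := by
  rw [Fay]
  rw [show Finset.Icc 1 2 = ({1, 2} : Finset ℕ) from rfl]
  rw [Finset.sum_insert (by decide), Finset.sum_singleton]
  ring

lemma comp_F1_e0 (B : MFrac 1) : msubst (fayArgs 2 1) (msubst (fun _ : Fin 1 => Xn 2 0) B)
    = msubst (fun _ : Fin 1 => -(Xn 2 0)) B := by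
  rw [msubst_comp sect_F1 sect_e0]
  congr 1
  funext m
  rw [Xn_eq (show (0:ℕ) < 2 by norm_num), MvPolynomial.aeval_X, fayArgs21_vals]
  simp [Xn]

lemma comp_F1_e1 (B : MFrac 1) : msubst (fayArgs 2 1) (msubst (fun _ : Fin 1 => Xn 2 1) B)
    = msubst (fun _ : Fin 1 => Xn 2 0 + Xn 2 1) B := by
  rw [msubst_comp sect_F1 sect_e1]
  congr 1
  funext m
  rw [Xn_eq (show (1:ℕ) < 2 by norm_num), MvPolynomial.aeval_X, fayArgs21_vals]
  simp [Xn]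

lemma comp_F2_e0 (B : MFrac 1) : msubst (fayArgs 2 2) (msubst (fun _ : Fin 1 => Xn 2 0) B)
    = msubst (fun _ : Fin 1 => Xn 2 1) B := by
  rw [msubst_comp sect_F2 sect_e0]
  congr 1
  funext m
  rw [Xn_eq (show (0:ℕ) < 2 by norm_num), MvPolynomial.aeval_X, fayArgs22_vals]
  simp [Xn]

lemma comp_F2_e1 (B : MFrac 1) : msubst (fayArgs 2 2) (msubst (fun _ : Fin 1 => Xn 2 1) B)
    = msubst (fun _ : Fin 1 => -(Xn 2 0 + Xn 2 1)) B := by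
  rw [msubst_comp sect_F2 sect_e1]
  congr 1
  funext m
  rw [Xn_eq (show (1:ℕ) < 2 by norm_num), MvPolynomial.aeval_X, fayArgs22_vals]
  simp [Xn]

end Main

/-- **Depth-2 Fay correction of the exponential (§3.3).** Let `Q ∈ ARI` and let
`E := exp_mu(Q)`.  Then
`ℱ(E)(u_1,u_2) = ℱ(Q)(u_1,u_2)
  + (1/2)·(E(u_1)E(u_2) + E(−u_1)E(u_1+u_2) + E(u_2)E(−u_1−u_2))`. -/
theorem fay_expMu_depth_two (Q : Mould) (hQ0 : Q 0 = 0) :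
    Fay (expMu Q) 2
      = Fay Q 2 + constF 2 (1 / 2) *
          (msubst (fun _ : Fin 1 => Xn 2 0) (expMu Q 1) *
              msubst (fun _ : Fin 1 => Xn 2 1) (expMu Q 1)
            + msubst (fun _ : Fin 1 => -(Xn 2 0)) (expMu Q 1) *
              msubst (fun _ : Fin 1 => Xn 2 0 + Xn 2 1) (expMu Q 1)
            + msubst (fun _ : Fin 1 => Xn 2 1) (expMu Q 1) *
              msubst (fun _ : Fin 1 => -(Xn 2 0 + Xn 2 1)) (expMu Q 1)) := by
  rw [fay_two (expMu Q), fay_two Q, expMu_one Q hQ0, expMu_two Q hQ0]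
  rw [msubst_add sect_F1, msubst_add sect_F2, msubst_mul sect_F1, msubst_mul sect_F2,
    msubst_mul sect_F1, msubst_mul sect_F2, msubst_constF sect_F1, msubst_constF sect_F2,
    comp_F1_e0, comp_F1_e1, comp_F2_e0, comp_F2_e1]
  ring

end
end

section
/- Lemma 3.3: Let T̂ ∈ ARI be the mould with T̂(u_1) = 0 and, for every r ≥ 2, T̂(u_1,…,u_r) = (B_r/r!) · Σ_{i=1}^{r} (−1)^{i−1} · C(r−1, i−1) · u_i, where B_r is the r-th Bernoulli number and C(n,k) denotes the binomial coefficient. Then dar⁻¹T̂ satisfies the strict Fay relations: ℱ(dar⁻¹T̂)(u_1,…,u_r) = 0 for every r ≥ 2. -/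
/-!
Moulds over ℚ: a mould is a family `A = (A_r)_{r ≥ 0}` where `A_r` lies in the
field `ℚ(u_1, …, u_r)` of rational functions in `r` commuting variables,
realized here as the fraction field of `MvPolynomial (Fin r) ℚ`.
Substitution of ℚ-linearly independent linear forms is realized by lifting the
corresponding (injective) polynomial substitution map to the fraction fields.
-/

noncomputable section

/-- The mould `T̂` with `T̂(∅) = 0`, `T̂(u_1) = 0` and, for `r ≥ 2`,
`T̂(u_1,…,u_r) = (B_r/r!)·Σ_{i=1}^r (−1)^{i−1}·C(r−1,i−1)·u_i`,
where `B_r` is the `r`-th Bernoulli number (convention `x/(eˣ−1) = Σ B_n xⁿ/n!`). -/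
def bernoulliMould : Mould := fun r =>
  if r < 2 then 0
  else toF (MvPolynomial.C (bernoulli r / (r.factorial : ℚ)) *
    ∑ i ∈ Finset.range r, MvPolynomial.C ((-1 : ℚ) ^ i * ((r - 1).choose i : ℚ)) * Xn r i)


/-! ### Auxiliary material for Lemma 3.3 -/

namespace L33

open MvPolynomial Finset

/-- ℕ-indexed version of `fayArgs`. -/
def fayN (r i : ℕ) : ℕ → MPoly r := fun m =>
  if m + 1 < i then Xn r (m + 1)
  else if m + 1 = i then -(sumXn r i)
  else if m = i then sumXn r (i + 1)
  else Xn r m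

lemma fayArgs_eq (r i : ℕ) (m : Fin r) : fayArgs r i m = fayN r i m.val := rfl

lemma Xn_lt {r k : ℕ} (h : k < r) : Xn r k = X (⟨k, h⟩ : Fin r) := dif_pos h

lemma Xn_ge {r k : ℕ} (h : r ≤ k) : Xn r k = 0 := dif_neg (by omega)

lemma aeval_Xn {r : ℕ} (ℓ : Fin r → MPoly r) (k : ℕ) :
    aeval ℓ (Xn r k) = if h : k < r then ℓ ⟨k, h⟩ else 0 := by
  unfold Xn
  split
  · next h => simp
  · simp

lemma aeval_Xn_lt {r : ℕ} (ℓ : Fin r → MPoly r) {k : ℕ} (h : k < r) :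
    aeval ℓ (Xn r k) = ℓ ⟨k, h⟩ := by rw [aeval_Xn, dif_pos h]

lemma sumXn_succ (r n : ℕ) : sumXn r (n + 1) = sumXn r n + Xn r n :=
  Finset.sum_range_succ _ n

lemma aeval_sumXn {r : ℕ} (ℓ : Fin r → MPoly r) (n : ℕ) :
    aeval ℓ (sumXn r n) = ∑ k ∈ range n, aeval ℓ (Xn r k) := by
  unfold sumXn; rw [map_sum]

/-- `fayArgs r 0` is the identity substitution. -/
lemma fayArgs_zero (r : ℕ) : fayArgs r 0 = X := by
  funext m
  rcases m with ⟨mv, hm⟩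
  rw [fayArgs_eq]
  unfold fayN
  rcases Nat.eq_zero_or_pos mv with h0 | h0
  · subst h0
    simp only [Nat.lt_irrefl, if_false, if_neg (by omega : ¬ (0:ℕ) + 1 < 0),
      if_neg (by omega : ¬ (0:ℕ) + 1 = 0), if_pos rfl]
    unfold sumXn
    rw [Finset.sum_range_one]
    exact Xn_lt hm
  · rw [if_neg (show ¬ (mv + 1 < 0) by omega), if_neg (show ¬ (mv + 1 = 0) by omega),
      if_neg (show ¬ (mv = 0) by omega)]
    exact Xn_lt hm

/-! Nonvanishing lemmas -/

def Lp (r : ℕ) : MPoly r :=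
  ∑ i ∈ Finset.range r, C ((-1 : ℚ) ^ i * ((r - 1).choose i : ℚ)) * Xn r i

def Qp (r : ℕ) : MPoly r := ∏ k ∈ Ico 1 r, Xn r k

def Pp (r : ℕ) : MPoly r := ∏ k ∈ range r, Xn r k

lemma eval_one_Xn (r k : ℕ) (h : k < r) : eval (fun _ => (1 : ℚ)) (Xn r k) = 1 := by
  rw [Xn_lt h]; simp

lemma toF_ne_zero {r : ℕ} {p : MPoly r} (h : p ≠ 0) : toF p ≠ 0 := fun h0 => h <|
  IsFractionRing.injective (MPoly r) (MFrac r)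
    (show algebraMap (MPoly r) (MFrac r) p = algebraMap (MPoly r) (MFrac r) 0 by
      rw [map_zero]; exact h0)

lemma sumXn_ne_zero {r n : ℕ} (h1 : 1 ≤ n) (h2 : n ≤ r) : sumXn r n ≠ 0 := by
  intro h
  have h3 : eval (fun _ => (1 : ℚ)) (sumXn r n) = n := by
    unfold sumXn
    rw [map_sum, Finset.sum_congr rfl (fun k hk => eval_one_Xn r k (by
      have := Finset.mem_range.mp hk; omega))]
    simp
  rw [h, map_zero] at h3
  exact Nat.cast_ne_zero.mpr (show n ≠ 0 by omega) h3.symm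

lemma Qp_ne_zero {r : ℕ} : Qp r ≠ 0 := by
  intro h
  have h3 : eval (fun _ => (1 : ℚ)) (Qp r) = 1 := by
    unfold Qp
    rw [map_prod, Finset.prod_congr rfl (fun k hk => eval_one_Xn r k (by
      have := Finset.mem_Ico.mp hk; omega))]
    simp
  rw [h] at h3
  simp at h3

lemma Xn_ne_zero {r k : ℕ} (h : k < r) : Xn r k ≠ 0 := by
  intro h0
  have h3 := eval_one_Xn r k h
  rw [h0] at h3
  simp at h3

/-! The inverse substitution to `fayArgs r i` (for `1 ≤ i ≤ r`) and injectivity. -/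

def invE (r i : ℕ) : ℕ → MPoly r := fun k =>
  if k = 0 then -(sumXn r i)
  else if k < i then Xn r (k - 1)
  else if k = i then Xn r (i - 1) + Xn r i
  else Xn r k

def invArgsF (r i : ℕ) : Fin r → MPoly r := fun k => invE r i k.val

lemma aeval_inv_Xn {r : ℕ} (i k : ℕ) (hk : k < r) :
    aeval (invArgsF r i) (Xn r k) = invE r i k := by
  rw [aeval_Xn_lt _ hk]; rfl

lemma aeval_inv_sumXn {r i : ℕ} (h1 : 1 ≤ i) (h2 : i ≤ r) :
    aeval (invArgsF r i) (sumXn r i) = sumXn r (i - 1) - sumXn r i := by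
  obtain ⟨i', rfl⟩ : ∃ i', i = i' + 1 := ⟨i - 1, by omega⟩
  rw [aeval_sumXn]
  rw [Finset.sum_congr rfl (fun k hk => aeval_inv_Xn _ k (by
    have := Finset.mem_range.mp hk; omega))]
  rw [Finset.sum_range_succ']
  have h0 : invE r (i' + 1) 0 = -(sumXn r (i' + 1)) := if_pos rfl
  have hstep : ∀ k ∈ Finset.range i', invE r (i' + 1) (k + 1) = Xn r k := by
    intro k hk
    have hk' := Finset.mem_range.mp hk
    unfold invE
    rw [if_neg (show ¬ (k + 1 = 0) by omega), if_pos (show k + 1 < i' + 1 by omega)]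
    congr 1
  rw [h0, Finset.sum_congr rfl hstep]
  have : (∑ k ∈ Finset.range i', Xn r k) = sumXn r i' := rfl
  rw [this]
  have : (i' + 1 - 1) = i' := by omega
  rw [this]
  ring

lemma left_inv {r i : ℕ} (h1 : 1 ≤ i) (h2 : i ≤ r) (k : Fin r) :
    aeval (invArgsF r i) (fayArgs r i k) = X k := by
  rcases k with ⟨kv, hk⟩
  rw [fayArgs_eq]
  unfold fayN
  simp only [Fin.val_mk]
  rcases lt_trichotomy (kv + 1) i with hc | hc | hc
  · -- kv + 1 < i
    rw [if_pos hc, aeval_inv_Xn _ _ (by omega)]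
    unfold invE
    rw [if_neg (show ¬ (kv + 1 = 0) by omega), if_pos hc]
    have hkv : kv + 1 - 1 = kv := by omega
    rw [hkv]
    exact Xn_lt hk
  · -- kv + 1 = i
    rw [if_neg (by omega), if_pos hc, map_neg, aeval_inv_sumXn h1 h2]
    have : sumXn r i = sumXn r (i - 1) + Xn r (i - 1) := by
      obtain ⟨i', rfl⟩ : ∃ i', i = i' + 1 := ⟨i - 1, by omega⟩
      simpa using sumXn_succ r i'
    have hx : Xn r (i - 1) = X (⟨kv, hk⟩ : Fin r) := by
      rw [Xn_lt (show i - 1 < r by omega)]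
      exact congrArg X (Fin.ext (by simp; omega))
    rw [this, ← hx]
    ring
  · -- kv + 1 > i
    rcases eq_or_ne kv i with hke | hke
    · -- kv = i, so i < r
      rw [if_neg (by omega), if_neg (by omega), if_pos hke]
      rw [aeval_sumXn]
      rw [Finset.sum_congr rfl (fun k hk' => aeval_inv_Xn _ k (by
        have := Finset.mem_range.mp hk'; omega))]
      rw [Finset.sum_range_succ]
      have hsum : (∑ k ∈ Finset.range i, invE r i k) =
          aeval (invArgsF r i) (sumXn r i) := by
        rw [aeval_sumXn, Finset.sum_congr rfl (fun k hk' => (aeval_inv_Xn _ k (by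
          have := Finset.mem_range.mp hk'; omega)).symm)]
      rw [hsum, aeval_inv_sumXn h1 h2]
      have hiE : invE r i i = Xn r (i - 1) + Xn r i := by
        unfold invE
        rw [if_neg (by omega), if_neg (by omega), if_pos rfl]
      rw [hiE]
      have hs : sumXn r i = sumXn r (i - 1) + Xn r (i - 1) := by
        obtain ⟨i', rfl⟩ : ∃ i', i = i' + 1 := ⟨i - 1, by omega⟩
        simpa using sumXn_succ r i'
      have hx : Xn r i = X (⟨kv, hk⟩ : Fin r) := by
        rw [Xn_lt (show i < r by omega)]
        exact congrArg X (Fin.ext (by simp; omega))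
      rw [hs, ← hx]
      ring
    · -- kv > i
      rw [if_neg (by omega), if_neg (by omega), if_neg hke,
        aeval_inv_Xn _ _ hk]
      unfold invE
      rw [if_neg (show ¬ (kv = 0) by omega), if_neg (by omega), if_neg hke]
      exact Xn_lt hk

lemma fay_comp_id {r i : ℕ} (h1 : 1 ≤ i) (h2 : i ≤ r) (p : MPoly r) :
    aeval (invArgsF r i) (aeval (fayArgs r i) p) = p := by
  have hcomp : (aeval (invArgsF r i)).comp (aeval (R := ℚ) (fayArgs r i)) =
      AlgHom.id ℚ (MPoly r) := by
    apply MvPolynomial.algHom_ext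
    intro k
    simp only [AlgHom.comp_apply, aeval_X, AlgHom.id_apply]
    exact left_inv h1 h2 k
  calc aeval (invArgsF r i) (aeval (fayArgs r i) p)
      = ((aeval (invArgsF r i)).comp (aeval (R := ℚ) (fayArgs r i))) p := rfl
    _ = p := by rw [hcomp]; rfl

lemma fay_inj {r i : ℕ} (h1 : 1 ≤ i) (h2 : i ≤ r) :
    Function.Injective ((algebraMap (MPoly r) (MFrac r)).comp
      (MvPolynomial.aeval (R := ℚ) (fayArgs r i)).toRingHom) := by
  intro a b hab
  simp only [RingHom.comp_apply] at hab
  have h3 : (MvPolynomial.aeval (R := ℚ) (fayArgs r i)) a =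
      (MvPolynomial.aeval (R := ℚ) (fayArgs r i)) b :=
    IsFractionRing.injective (MPoly r) (MFrac r) hab
  have := congrArg (aeval (invArgsF r i)) h3
  rwa [fay_comp_id h1 h2, fay_comp_id h1 h2] at this

lemma msubst_div {s r : ℕ} (ℓ : Fin s → MPoly r)
    (h : Function.Injective ((algebraMap (MPoly r) (MFrac r)).comp
      (MvPolynomial.aeval (R := ℚ) ℓ).toRingHom)) (p q : MPoly s) :
    msubst ℓ (toF p / toF q) = toF (aeval ℓ p) / toF (aeval ℓ q) := by
  unfold msubst
  rw [dif_pos h, map_div₀]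
  unfold toF
  rw [IsFractionRing.lift_algebraMap, IsFractionRing.lift_algebraMap]
  rfl

/-! Product identities for the Fay denominators. -/

lemma aeval_fay_Xn {r : ℕ} (i k : ℕ) (hk : k < r) :
    aeval (fayArgs r i) (Xn r k) = fayN r i k := by
  rw [aeval_Xn_lt _ hk]; rfl

lemma aeval_fay_Pp {r : ℕ} (i : ℕ) :
    aeval (fayArgs r i) (Pp r) = ∏ k ∈ range r, fayN r i k := by
  unfold Pp
  rw [map_prod]
  exact Finset.prod_congr rfl fun k hk => aeval_fay_Xn i k (Finset.mem_range.mp hk)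

lemma prod_fay_mid {r i : ℕ} (h1 : 1 ≤ i) (h2 : i < r) :
    (∏ k ∈ range r, fayN r i k) * Xn r i
      = -(Qp r * (sumXn r i * sumXn r (i + 1))) := by
  obtain ⟨i', rfl⟩ : ∃ i', i = i' + 1 := ⟨i - 1, by omega⟩
  have hsplit : (∏ k ∈ range r, fayN r (i' + 1) k)
      = (∏ k ∈ range (i' + 2), fayN r (i' + 1) k) *
        ∏ k ∈ Ico (i' + 2) r, fayN r (i' + 1) k := by
    rw [Finset.range_eq_Ico, ← Finset.prod_Ico_consecutive _ (by omega : 0 ≤ i' + 2) (by omega : i' + 2 ≤ r), ← Finset.range_eq_Ico]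
  have hA : (∏ k ∈ range (i' + 2), fayN r (i' + 1) k)
      = (∏ k ∈ range i', Xn r (k + 1)) * (-(sumXn r (i' + 1)) * sumXn r (i' + 2)) := by
    rw [Finset.prod_range_succ, Finset.prod_range_succ]
    have hmid : fayN r (i' + 1) i' = -(sumXn r (i' + 1)) := by
      unfold fayN
      rw [if_neg (by omega), if_pos rfl]
    have htop : fayN r (i' + 1) (i' + 1) = sumXn r (i' + 2) := by
      unfold fayN
      rw [if_neg (by omega), if_neg (by omega), if_pos rfl]
    rw [hmid, htop, Finset.prod_congr rfl (fun k hk => by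
      have hk' := Finset.mem_range.mp hk
      show fayN r (i' + 1) k = Xn r (k + 1)
      unfold fayN
      rw [if_pos (by omega)])]
    ring
  have hB : (∏ k ∈ Ico (i' + 2) r, fayN r (i' + 1) k) = ∏ k ∈ Ico (i' + 2) r, Xn r k :=
    Finset.prod_congr rfl fun k hk => by
      have hk' := Finset.mem_Ico.mp hk
      unfold fayN
      rw [if_neg (by omega), if_neg (by omega), if_neg (by omega)]
  have hQ : Qp r = (∏ k ∈ range i', Xn r (k + 1)) *
      (Xn r (i' + 1) * ∏ k ∈ Ico (i' + 2) r, Xn r k) := by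
    unfold Qp
    rw [← Finset.prod_Ico_consecutive _ (by omega : 1 ≤ i' + 1) (by omega : i' + 1 ≤ r),
      Finset.prod_eq_prod_Ico_succ_bot (by omega : i' + 1 < r),
      Finset.prod_Ico_eq_prod_range]
    simp only [Nat.add_sub_cancel]
    rw [Finset.prod_congr rfl (fun k _ => by rw [Nat.add_comm 1 k])]
  rw [hsplit, hA, hB, hQ]
  ring

lemma prod_fay_top {r : ℕ} (h1 : 1 ≤ r) :
    (∏ k ∈ range r, fayN r r k) = -(Qp r * sumXn r r) := by
  obtain ⟨r', rfl⟩ : ∃ r', r = r' + 1 := ⟨r - 1, by omega⟩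
  rw [Finset.prod_range_succ]
  have htop : fayN (r' + 1) (r' + 1) r' = -(sumXn (r' + 1) (r' + 1)) := by
    unfold fayN
    rw [if_neg (by omega), if_pos rfl]
  have hrest : (∏ k ∈ range r', fayN (r' + 1) (r' + 1) k)
      = ∏ k ∈ range r', Xn (r' + 1) (k + 1) :=
    Finset.prod_congr rfl fun k hk => by
      have hk' := Finset.mem_range.mp hk
      unfold fayN
      rw [if_pos (by omega)]
  have hQ : Qp (r' + 1) = ∏ k ∈ range r', Xn (r' + 1) (k + 1) := by
    unfold Qp
    rw [Finset.prod_Ico_eq_prod_range]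
    simp only [Nat.add_sub_cancel]
    exact Finset.prod_congr rfl fun k _ => by rw [Nat.add_comm 1 k]
  rw [htop, hrest, ← hQ]
  ring

/-! The key difference identity between consecutive Fay substitutions of `Lp`. -/

def δq (j m : ℕ) : ℚ :=
  (if m + 1 = j then (-1 : ℚ) else 0) + (if m = j then 2 else 0) +
    (if m = j + 1 then -1 else 0)

lemma fay_diff {r : ℕ} (j m : ℕ) (hm : m < r) :
    fayN r j m - fayN r (j + 1) m = C (δq j m) * sumXn r (j + 1) := by
  unfold fayN δq
  rcases lt_trichotomy (m + 1) j with hc | hc | hc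
  · rw [if_pos hc, if_pos (by omega : m + 1 < j + 1)]
    rw [if_neg (by omega), if_neg (by omega), if_neg (by omega)]
    simp
  · -- m + 1 = j
    rw [if_neg (by omega), if_pos hc, if_pos (by omega : m + 1 < j + 1)]
    rw [if_pos hc, if_neg (by omega), if_neg (by omega)]
    rw [← hc]
    rw [show ((-1 : ℚ) + 0 + 0) = -1 by ring, map_neg, map_one,
      sumXn_succ r (m + 1)]
    ring
  · rcases eq_or_ne m j with hme | hme
    · -- m = j
      subst hme
      rw [if_neg (by omega), if_neg (by omega), if_pos rfl,
        if_neg (by omega), if_pos rfl]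
      rw [if_neg (by omega), if_pos rfl, if_neg (by omega)]
      rw [show ((0 : ℚ) + 2 + 0) = 1 + 1 by ring, map_add, map_one]
      ring
    · rcases eq_or_ne m (j + 1) with hme' | hme'
      · -- m = j + 1
        subst hme'
        rw [if_neg (by omega), if_neg (by omega), if_neg (by omega),
          if_neg (by omega), if_neg (by omega), if_pos rfl]
        rw [if_neg (by omega), if_neg hme, if_pos rfl]
        rw [sumXn_succ r (j + 1)]
        rw [show ((0 : ℚ) + 0 + -1) = -1 by ring, map_neg, map_one]
        ring
      · -- m > j + 1
        rw [if_neg (by omega), if_neg (by omega), if_neg hme,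
          if_neg (by omega), if_neg (by omega), if_neg hme']
        rw [if_neg (by omega), if_neg hme, if_neg hme']
        simp

/-! The difference of consecutive Fay substitutions of `Lp`, and the key ℚ-identity. -/

lemma diff_Lp {r : ℕ} (j : ℕ) :
    aeval (fayArgs r j) (Lp r) - aeval (fayArgs r (j + 1)) (Lp r)
      = C (∑ m ∈ range r, ((-1 : ℚ) ^ m * ((r - 1).choose m : ℚ)) * δq j m) *
          sumXn r (j + 1) := by
  unfold Lp
  rw [map_sum, map_sum, ← Finset.sum_sub_distrib, map_sum, Finset.sum_mul]
  refine Finset.sum_congr rfl fun m hm => ?_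
  have hm' := Finset.mem_range.mp hm
  set c : ℚ := (-1 : ℚ) ^ m * ((r - 1).choose m : ℚ) with hc
  have hev : ∀ i : ℕ, aeval (fayArgs r i) (C c * Xn r m) = C c * fayN r i m := fun i => by
    rw [map_mul, aeval_C, MvPolynomial.algebraMap_eq, aeval_fay_Xn _ _ hm']
  rw [hev j, hev (j + 1), ← mul_sub, fay_diff j m hm']
  simp only [hc, map_mul]
  ring

lemma key_sum {r : ℕ} (hr : 2 ≤ r) :
    (bernoulli r / (r.factorial : ℚ)) *
      ∑ j ∈ range r, ∑ m ∈ range r, ((-1 : ℚ) ^ m * ((r - 1).choose m : ℚ)) * δq j m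
        = 0 := by
  rw [Finset.sum_comm]
  have hinner : ∀ m ∈ range r,
      (∑ j ∈ range r, ((-1 : ℚ) ^ m * ((r - 1).choose m : ℚ)) * δq j m)
        = ((-1 : ℚ) ^ m * ((r - 1).choose m : ℚ)) *
            ((if m = 0 then 1 else 0) + (if m = r - 1 then 1 else 0)) := by
    intro m hm
    have hm' := Finset.mem_range.mp hm
    rw [← Finset.mul_sum]
    congr 1
    unfold δq
    rw [Finset.sum_add_distrib, Finset.sum_add_distrib,
      Finset.sum_ite_eq (range r) (m + 1) (fun _ => (-1 : ℚ)),
      Finset.sum_ite_eq (range r) m (fun _ => (2 : ℚ))]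
    have h3 : (∑ j ∈ range r, if m = j + 1 then (-1 : ℚ) else 0)
        = if 1 ≤ m then -1 else 0 := by
      rcases Nat.eq_zero_or_pos m with h0 | h0
      · subst h0
        rw [if_neg (by omega)]
        exact Finset.sum_eq_zero fun j _ => if_neg (by omega)
      · obtain ⟨m', rfl⟩ : ∃ m', m = m' + 1 := ⟨m - 1, by omega⟩
        rw [if_pos (show 1 ≤ m' + 1 by omega)]
        have hcongr : (∑ j ∈ range r, if m' + 1 = j + 1 then (-1 : ℚ) else 0)
            = ∑ j ∈ range r, if m' = j then (-1 : ℚ) else 0 := by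
          simp only [add_left_inj]
        rw [hcongr, Finset.sum_ite_eq (range r) m' (fun _ => (-1 : ℚ)),
          if_pos (Finset.mem_range.mpr (by omega))]
    rw [h3, if_pos (Finset.mem_range.mpr hm')]
    by_cases hmr : m + 1 < r
    · rw [if_pos (Finset.mem_range.mpr hmr)]
      rcases Nat.eq_zero_or_pos m with h0 | h0
      · subst h0
        rw [if_neg (by omega), if_pos rfl, if_neg (by omega)]
        norm_num
      · rw [if_pos (show 1 ≤ m from h0), if_neg (by omega), if_neg (by omega)]
        norm_num
    · rw [if_neg (fun hmem => hmr (Finset.mem_range.mp hmem))]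
      have hm0 : m = r - 1 := by omega
      rw [if_pos (show 1 ≤ m by omega), if_neg (by omega), if_pos hm0]
      norm_num
  rw [Finset.sum_congr rfl hinner]
  have hsum : (∑ m ∈ range r,
      ((-1 : ℚ) ^ m * ((r - 1).choose m : ℚ)) *
        ((if m = 0 then 1 else 0) + (if m = r - 1 then 1 else 0)))
      = 1 + (-1 : ℚ) ^ (r - 1) := by
    rw [Finset.sum_congr rfl (fun m _ => mul_add (((-1 : ℚ) ^ m * ((r - 1).choose m : ℚ))) _ _),
      Finset.sum_add_distrib]
    have e1 : (∑ m ∈ range r,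
        ((-1 : ℚ) ^ m * ((r - 1).choose m : ℚ)) * (if m = 0 then 1 else 0)) = 1 := by
      rw [Finset.sum_congr rfl (fun m _ => by
        rw [mul_ite, mul_one, mul_zero])]
      rw [Finset.sum_ite_eq' (range r) 0
        (fun m => ((-1 : ℚ) ^ m * ((r - 1).choose m : ℚ)))]
      rw [if_pos (Finset.mem_range.mpr (by omega))]
      norm_num
    have e2 : (∑ m ∈ range r,
        ((-1 : ℚ) ^ m * ((r - 1).choose m : ℚ)) * (if m = r - 1 then 1 else 0))
          = (-1 : ℚ) ^ (r - 1) := by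
      rw [Finset.sum_congr rfl (fun m _ => by
        rw [mul_ite, mul_one, mul_zero])]
      rw [Finset.sum_ite_eq' (range r) (r - 1)
        (fun m => ((-1 : ℚ) ^ m * ((r - 1).choose m : ℚ)))]
      rw [if_pos (Finset.mem_range.mpr (by omega))]
      simp
    rw [e1, e2]
  rw [hsum]
  rcases Nat.even_or_odd r with he | ho
  · have hodd : Odd (r - 1) := by
      rcases he with ⟨t, ht⟩
      exact ⟨t - 1, by omega⟩
    rw [hodd.neg_one_pow]
    ring
  · have hb : bernoulli r = 0 := by
      rw [bernoulli_eq_bernoulli'_of_ne_one (by omega)]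
      exact bernoulli'_eq_zero_of_odd ho (by omega)
    rw [hb]
    norm_num

/-! `toF` is a ring homomorphism (restated). -/

lemma toF_mul {r : ℕ} (p q : MPoly r) : toF (p * q) = toF p * toF q :=
  map_mul (algebraMap (MPoly r) (MFrac r)) p q
lemma toF_add {r : ℕ} (p q : MPoly r) : toF (p + q) = toF p + toF q :=
  map_add (algebraMap (MPoly r) (MFrac r)) p q
lemma toF_sub {r : ℕ} (p q : MPoly r) : toF (p - q) = toF p - toF q :=
  map_sub (algebraMap (MPoly r) (MFrac r)) p q
lemma toF_neg {r : ℕ} (p : MPoly r) : toF (-p) = -toF p :=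
  map_neg (algebraMap (MPoly r) (MFrac r)) p

/-! Closed forms for the individual terms of the Fay sum. -/

lemma darInv_eq {r : ℕ} (hr : 2 ≤ r) :
    darInv bernoulliMould r
      = toF (C (bernoulli r / (r.factorial : ℚ)) * Lp r) / toF (Pp r) := by
  unfold darInv bernoulliMould Pp Lp
  rw [if_neg (by omega)]

lemma term_mid {r i : ℕ} (hr : 2 ≤ r) (h1 : 1 ≤ i) (h2 : i < r) :
    msubst (fayArgs r i) (darInv bernoulliMould r)
      = toF (aeval (fayArgs r i) (C (bernoulli r / (r.factorial : ℚ)) * Lp r)) *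
          (toF (sumXn r (i + 1)))⁻¹ * (toF (Qp r))⁻¹
        - toF (aeval (fayArgs r i) (C (bernoulli r / (r.factorial : ℚ)) * Lp r)) *
          (toF (sumXn r i))⁻¹ * (toF (Qp r))⁻¹ := by
  rw [darInv_eq hr, msubst_div _ (fay_inj h1 h2.le) _ _, aeval_fay_Pp]
  have hx : toF (Xn r i) ≠ 0 := toF_ne_zero (Xn_ne_zero h2)
  have hq : toF (Qp r) ≠ 0 := toF_ne_zero Qp_ne_zero
  have ha : toF (sumXn r i) ≠ 0 := toF_ne_zero (sumXn_ne_zero h1 h2.le)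
  have hden : toF (∏ k ∈ range r, fayN r i k) * toF (Xn r i)
      = -(toF (Qp r) * (toF (sumXn r i) * toF (sumXn r (i + 1)))) := by
    rw [← toF_mul, prod_fay_mid h1 h2, toF_neg, toF_mul, toF_mul]
  have hsum : toF (sumXn r (i + 1)) = toF (sumXn r i) + toF (Xn r i) := by
    rw [sumXn_succ, toF_add]
  have ha1 : toF (sumXn r i) + toF (Xn r i) ≠ 0 := by
    rw [← hsum]
    exact toF_ne_zero (sumXn_ne_zero (by omega) (by omega))
  rw [hsum] at hden ⊢
  have hN : toF (∏ k ∈ range r, fayN r i k) ≠ 0 := by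
    intro h0
    rw [h0, zero_mul] at hden
    exact mul_ne_zero hq (mul_ne_zero ha ha1) (neg_eq_zero.mp hden.symm)
  have hNval : toF (∏ k ∈ range r, fayN r i k)
      = -(toF (Qp r) * (toF (sumXn r i) * (toF (sumXn r i) + toF (Xn r i)))) /
          toF (Xn r i) := (eq_div_iff hx).mpr hden
  rw [hNval]
  field_simp
  ring

lemma term_top {r : ℕ} (hr : 2 ≤ r) :
    msubst (fayArgs r r) (darInv bernoulliMould r)
      = -(toF (aeval (fayArgs r r) (C (bernoulli r / (r.factorial : ℚ)) * Lp r)) *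
          (toF (sumXn r r))⁻¹ * (toF (Qp r))⁻¹) := by
  rw [darInv_eq hr, msubst_div _ (fay_inj (by omega) le_rfl) _ _, aeval_fay_Pp]
  have hq : toF (Qp r) ≠ 0 := toF_ne_zero Qp_ne_zero
  have ha : toF (sumXn r r) ≠ 0 := toF_ne_zero (sumXn_ne_zero (by omega) le_rfl)
  have hden : toF (∏ k ∈ range r, fayN r r k)
      = -(toF (Qp r) * toF (sumXn r r)) := by
    rw [← toF_mul, prod_fay_top (by omega)]
    rw [toF_neg, toF_mul]
  rw [hden, div_neg, neg_inj, div_eq_mul_inv, mul_inv]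
  ring

lemma term_zero {r : ℕ} (hr : 2 ≤ r) :
    darInv bernoulliMould r
      = toF (C (bernoulli r / (r.factorial : ℚ)) * Lp r) *
          (toF (sumXn r 1))⁻¹ * (toF (Qp r))⁻¹ := by
  rw [darInv_eq hr]
  have hPp : Pp r = Xn r 0 * Qp r := by
    unfold Pp Qp
    rw [Finset.range_eq_Ico, Finset.prod_eq_prod_Ico_succ_bot (by omega : 0 < r)]
  have hs1 : sumXn r 1 = Xn r 0 := by
    unfold sumXn
    rw [Finset.sum_range_one]
  have hx : toF (Xn r 0) ≠ 0 := toF_ne_zero (Xn_ne_zero (by omega))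
  have hq : toF (Qp r) ≠ 0 := toF_ne_zero Qp_ne_zero
  have hsplit : toF (Xn r 0 * Qp r) = toF (Xn r 0) * toF (Qp r) := toF_mul _ _
  rw [hPp, hsplit, hs1, div_eq_mul_inv, mul_inv]
  ring

/-! Final assembly. -/

lemma aeval_fay_zero {r : ℕ} (p : MPoly r) : aeval (fayArgs r 0) p = p := by
  rw [fayArgs_zero]
  exact aeval_X_left_apply p

def Uf (r j : ℕ) : MFrac r :=
  toF (aeval (fayArgs r j) (C (bernoulli r / (r.factorial : ℚ)) * Lp r)) *
    (toF (sumXn r (j + 1)))⁻¹ * (toF (Qp r))⁻¹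

def Vf (r j : ℕ) : MFrac r :=
  toF (aeval (fayArgs r j) (C (bernoulli r / (r.factorial : ℚ)) * Lp r)) *
    (toF (sumXn r j))⁻¹ * (toF (Qp r))⁻¹

lemma term_mid' {r i : ℕ} (hr : 2 ≤ r) (h1 : 1 ≤ i) (h2 : i < r) :
    msubst (fayArgs r i) (darInv bernoulliMould r) = Uf r i - Vf r i :=
  term_mid hr h1 h2

lemma term_top' {r : ℕ} (hr : 2 ≤ r) :
    msubst (fayArgs r r) (darInv bernoulliMould r) = -(Vf r r) :=
  term_top hr

lemma term_zero' {r : ℕ} (hr : 2 ≤ r) : darInv bernoulliMould r = Uf r 0 := by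
  rw [term_zero hr]
  unfold Uf
  rw [aeval_fay_zero]

lemma toF_sum {r : ℕ} (s : Finset ℕ) (f : ℕ → MPoly r) :
    toF (∑ j ∈ s, f j) = ∑ j ∈ s, toF (f j) :=
  map_sum (algebraMap (MPoly r) (MFrac r)) f s

lemma hdiff {r : ℕ} (hr : 2 ≤ r) (j : ℕ) (hj : j < r) :
    Uf r j - Vf r (j + 1)
      = toF (C ((bernoulli r / (r.factorial : ℚ)) *
          ∑ m ∈ range r, ((-1 : ℚ) ^ m * ((r - 1).choose m : ℚ)) * δq j m)) *
          (toF (Qp r))⁻¹ := by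
  have haj : toF (sumXn r (j + 1)) ≠ 0 :=
    toF_ne_zero (sumXn_ne_zero (by omega) (by omega))
  have hB : ∀ i : ℕ, aeval (fayArgs r i) (C (bernoulli r / (r.factorial : ℚ)) * Lp r)
      = C (bernoulli r / (r.factorial : ℚ)) * aeval (fayArgs r i) (Lp r) := fun i => by
    rw [map_mul, aeval_C, MvPolynomial.algebraMap_eq]
  have h1 : aeval (fayArgs r j) (C (bernoulli r / (r.factorial : ℚ)) * Lp r)
      - aeval (fayArgs r (j + 1)) (C (bernoulli r / (r.factorial : ℚ)) * Lp r)
      = C ((bernoulli r / (r.factorial : ℚ)) *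
          ∑ m ∈ range r, ((-1 : ℚ) ^ m * ((r - 1).choose m : ℚ)) * δq j m) *
          sumXn r (j + 1) := by
    rw [hB j, hB (j + 1), ← mul_sub, diff_Lp j, map_mul, ← mul_assoc]
  unfold Uf Vf
  have hfac : ∀ A B x q : MFrac r,
      A * x⁻¹ * q⁻¹ - B * x⁻¹ * q⁻¹ = (A - B) * x⁻¹ * q⁻¹ := fun A B x q => by ring
  rw [hfac, ← toF_sub, h1, toF_mul, mul_assoc (toF (C _)), mul_inv_cancel₀ haj, mul_one]

lemma main {r : ℕ} (hr : 2 ≤ r) : Fay (darInv bernoulliMould) r = 0 := by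
  have hq0 : toF (Qp r) ≠ 0 := toF_ne_zero Qp_ne_zero
  calc Fay (darInv bernoulliMould) r
      = darInv bernoulliMould r +
          ∑ i ∈ Finset.Icc 1 r, msubst (fayArgs r i) (darInv bernoulliMould r) := rfl
    _ = Uf r 0 + ((∑ i ∈ Finset.Ico 1 r, (Uf r i - Vf r i)) + -(Vf r r)) := by
        rw [← Finset.Ico_add_one_right_eq_Icc, Finset.sum_Ico_succ_top (by omega : 1 ≤ r),
          Finset.sum_congr rfl (fun i hi =>
            term_mid' hr (Finset.mem_Ico.mp hi).1 (Finset.mem_Ico.mp hi).2),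
          term_top' hr, term_zero' hr]
    _ = (Uf r 0 + ∑ i ∈ Finset.Ico 1 r, Uf r i) -
          ((∑ i ∈ Finset.Ico 1 r, Vf r i) + Vf r r) := by
        rw [Finset.sum_sub_distrib]
        ring
    _ = (∑ j ∈ Finset.range r, Uf r j) - (∑ j ∈ Finset.range r, Vf r (j + 1)) := by
        congr 1
        · rw [Finset.range_eq_Ico, Finset.sum_eq_sum_Ico_succ_bot (by omega : 0 < r)]
        · rw [← Finset.sum_Ico_succ_top (by omega : 1 ≤ r), Finset.sum_Ico_eq_sum_range]
          simp only [Nat.add_sub_cancel]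
          exact Finset.sum_congr rfl fun j _ => by rw [Nat.add_comm 1 j]
    _ = ∑ j ∈ Finset.range r, (Uf r j - Vf r (j + 1)) := (Finset.sum_sub_distrib _ _).symm
    _ = ∑ j ∈ Finset.range r, toF (C ((bernoulli r / (r.factorial : ℚ)) *
          ∑ m ∈ range r, ((-1 : ℚ) ^ m * ((r - 1).choose m : ℚ)) * δq j m)) *
          (toF (Qp r))⁻¹ :=
        Finset.sum_congr rfl fun j hj => hdiff hr j (Finset.mem_range.mp hj)
    _ = toF (C (∑ j ∈ Finset.range r, (bernoulli r / (r.factorial : ℚ)) *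
          ∑ m ∈ range r, ((-1 : ℚ) ^ m * ((r - 1).choose m : ℚ)) * δq j m)) *
          (toF (Qp r))⁻¹ := by
        rw [← Finset.sum_mul, ← toF_sum, ← map_sum C]
    _ = 0 := by
        rw [← Finset.mul_sum, key_sum hr, map_zero]
        have : toF (0 : MPoly r) = 0 := map_zero (algebraMap (MPoly r) (MFrac r))
        rw [this, zero_mul]

end L33
/-- **Lemma 3.3.** The mould `dar⁻¹T̂` satisfies the strict Fay relations:
`ℱ(dar⁻¹T̂)(u_1,…,u_r) = 0` for every `r ≥ 2`. -/
theorem lemma_3_3 : ∀ r : ℕ, 2 ≤ r → Fay (darInv bernoulliMould) r = 0 := by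
  intro r hr
  exact L33.main hr

end
end

section
/- Core identity of Appendix B (equation (B.2)): Fix an even integer r ≥ 2 and let T'_r(u_1,…,u_r) := ( Σ_{i=1}^{r} (−1)^{i−1} · C(r−1, i−1) · u_i ) / (u_1 u_2 ⋯ u_r) ∈ ℚ(u_1,…,u_r), where C(n,k) denotes the binomial coefficient. Then, with ū_j := u_1+⋯+u_j: T'_r(u_1,…,u_r) + Σ_{j=1}^{r−1} T'_r(u_2,…,u_j, −ū_j, ū_{j+1}, u_{j+2},…,u_r) + T'_r(u_2,…,u_r, −ū_r) = 0 (each term being the substitution of the indicated ℚ-linearly independent linear forms into the rational function T'_r; the j = 1 term is T'_r(−u_1, u_1+u_2, u_3,…,u_r)). -/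
/-!
Moulds over ℚ: a mould is a family `A = (A_r)_{r ≥ 0}` where `A_r` lies in the
field `ℚ(u_1, …, u_r)` of rational functions in `r` commuting variables,
realized here as the fraction field of `MvPolynomial (Fin r) ℚ`.
Substitution of ℚ-linearly independent linear forms is realized by lifting the
corresponding (injective) polynomial substitution map to the fraction fields.
-/

noncomputable section

/-- `T'_r := (Σ_{i=1}^r (−1)^{i−1}·C(r−1,i−1)·u_i)/(u_1⋯u_r) ∈ ℚ(u_1,…,u_r)`. -/
def Tprime (r : ℕ) : MFrac r :=
  toF (∑ i ∈ Finset.range r, MvPolynomial.C ((-1 : ℚ) ^ i * ((r - 1).choose i : ℚ)) * Xn r i)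
    / toF (∏ k ∈ Finset.range r, Xn r k)

namespace EqB2
open Finset MvPolynomial

variable {r : ℕ}

lemma toF_injective : Function.Injective (toF (r := r)) :=
  IsFractionRing.injective _ _

lemma toF_ne_zero {p : MPoly r} (h : p ≠ 0) : toF p ≠ 0 := by
  intro h0
  exact h (toF_injective (by simpa [toF] using h0))

lemma Xn_ne_zero {k : ℕ} (h : k < r) : Xn r k ≠ 0 := by
  simp only [Xn, dif_pos h]
  exact MvPolynomial.X_ne_zero _

lemma sumXn_succ (n : ℕ) : sumXn r (n + 1) = sumXn r n + Xn r n := by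
  simp [sumXn, Finset.sum_range_succ]

lemma sumXn_one : sumXn r 1 = Xn r 0 := by
  simp [sumXn]

lemma sumXn_ne_zero {n : ℕ} (h1 : 1 ≤ n) (h2 : n ≤ r) : sumXn r n ≠ 0 := by
  intro h0
  have h := congrArg (MvPolynomial.eval (fun _ : Fin r => (1 : ℚ))) h0
  rw [sumXn, map_sum, map_zero] at h
  have h2' : ∀ k ∈ Finset.range n, MvPolynomial.eval (fun _ : Fin r => (1 : ℚ)) (Xn r k) = 1 := by
    intro k hk
    rw [Xn, dif_pos (lt_of_lt_of_le (Finset.mem_range.mp hk) h2), MvPolynomial.eval_X]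
  rw [Finset.sum_congr rfl h2'] at h
  simp at h
  omega

lemma Xn_val (m : Fin r) : Xn r m.val = MvPolynomial.X m := by
  simp [Xn, m.isLt]

lemma aeval_Xn (f : Fin r → MPoly r) (k : ℕ) :
    MvPolynomial.aeval f (Xn r k) = if h : k < r then f ⟨k, h⟩ else 0 := by
  unfold Xn
  split_ifs with h
  · exact MvPolynomial.aeval_X f _
  · exact map_zero _

lemma aeval_sumXn (f : Fin r → MPoly r) (n : ℕ) :
    MvPolynomial.aeval f (sumXn r n) = ∑ k ∈ Finset.range n, MvPolynomial.aeval f (Xn r k) := by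
  rw [sumXn, map_sum]

end EqB2
namespace EqB2
open Finset MvPolynomial

variable {r : ℕ}

lemma msubst_div {s : ℕ} (ℓ : Fin s → MPoly r)
    (h : Function.Injective ((algebraMap (MPoly r) (MFrac r)).comp
      (MvPolynomial.aeval (R := ℚ) ℓ).toRingHom))
    (p q : MPoly s) :
    msubst ℓ (toF p / toF q)
      = toF (MvPolynomial.aeval ℓ p) / toF (MvPolynomial.aeval ℓ q) := by
  rw [msubst, dif_pos h, map_div₀]
  rw [show toF p = algebraMap (MPoly s) (MFrac s) p from rfl,
    show toF q = algebraMap (MPoly s) (MFrac s) q from rfl,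
    IsFractionRing.lift_algebraMap, IsFractionRing.lift_algebraMap]
  rfl

/-- ℕ-indexed inverse substitution for the `i`-th Fay arguments. -/
def fayInvN (r i : ℕ) : ℕ → MPoly r := fun k =>
  if k = 0 then -(sumXn r i)
  else if k < i then Xn r (k - 1)
  else if k = i then Xn r i + Xn r (i - 1)
  else Xn r k

def fayInv (r i : ℕ) : Fin r → MPoly r := fun k => fayInvN r i k.val

lemma aeval_fayInv_Xn {i k : ℕ} (hk : k < r) :
    MvPolynomial.aeval (fayInv r i) (Xn r k) = fayInvN r i k := by
  rw [aeval_Xn, dif_pos hk]; rfl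

lemma sum_fayInvN {i : ℕ} (h1 : 1 ≤ i) (h2 : i ≤ r) :
    ∑ k ∈ Finset.range i, MvPolynomial.aeval (fayInv r i) (Xn r k) = -(Xn r (i - 1)) := by
  obtain ⟨j, rfl⟩ : ∃ j, i = j + 1 := ⟨i - 1, by omega⟩
  rw [Finset.sum_congr rfl (fun k hk =>
    aeval_fayInv_Xn (lt_of_lt_of_le (Finset.mem_range.mp hk) h2))]
  rw [Finset.sum_range_succ']
  have hterm : ∀ k ∈ Finset.range j, fayInvN r (j + 1) (k + 1) = Xn r k := by
    intro k hk
    have hk' := Finset.mem_range.mp hk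
    simp only [fayInvN]
    rw [if_neg (by omega), if_pos (by omega)]
    simp
  rw [Finset.sum_congr rfl hterm]
  have h0 : fayInvN r (j + 1) 0 = -(sumXn r (j + 1)) := by simp [fayInvN]
  rw [h0, sumXn_succ]
  simp only [Nat.add_sub_cancel]
  rw [show (∑ k ∈ Finset.range j, Xn r k) = sumXn r j from rfl]
  ring

lemma fay_comp {i : ℕ} (h1 : 1 ≤ i) (h2 : i ≤ r) (m : Fin r) :
    MvPolynomial.aeval (fayInv r i) (fayArgs r i m) = MvPolynomial.X m := by
  have hm := m.isLt
  rw [fayArgs]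
  split_ifs with hc1 hc2 hc3
  · -- m.val + 1 < i : arg is Xn r (m.val+1)
    rw [aeval_fayInv_Xn (by omega)]
    rw [fayInvN, if_neg (by omega), if_pos (by omega)]
    simpa using Xn_val m
  · -- m.val + 1 = i : arg is -(sumXn r i)
    rw [map_neg, aeval_sumXn, sum_fayInvN h1 h2, neg_neg,
      show i - 1 = m.val by omega, Xn_val]
  · -- m.val = i : arg is sumXn r (i+1)
    rw [aeval_sumXn, Finset.sum_range_succ, sum_fayInvN h1 (by omega),
      aeval_fayInv_Xn (by omega)]
    rw [fayInvN, if_neg (by omega), if_neg (by omega), if_pos rfl]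
    rw [show i = m.val from hc3.symm]
    rw [Xn_val]
    ring
  · -- m.val ≥ i + 1 : arg is Xn r m.val
    rw [aeval_fayInv_Xn hm]
    rw [fayInvN, if_neg (by omega), if_neg (by omega), if_neg (by omega)]
    exact Xn_val m

lemma fay_injective {i : ℕ} (h1 : 1 ≤ i) (h2 : i ≤ r) :
    Function.Injective ((algebraMap (MPoly r) (MFrac r)).comp
      (MvPolynomial.aeval (R := ℚ) (fayArgs r i)).toRingHom) := by
  rw [RingHom.coe_comp]
  apply Function.Injective.comp (IsFractionRing.injective (MPoly r) (MFrac r))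
  have hcomp : (MvPolynomial.aeval (R := ℚ) (fayInv r i)).comp
      (MvPolynomial.aeval (R := ℚ) (fayArgs r i)) = AlgHom.id ℚ (MPoly r) :=
    MvPolynomial.algHom_ext (fun m => by
      simp only [AlgHom.comp_apply, MvPolynomial.aeval_X, AlgHom.id_apply]
      exact fay_comp h1 h2 m)
  intro a b hab
  have h3 := congrArg (MvPolynomial.aeval (R := ℚ) (fayInv r i)) hab
  calc a = (MvPolynomial.aeval (fayInv r i)) ((MvPolynomial.aeval (fayArgs r i)) a) := by
          rw [← AlgHom.comp_apply, hcomp]; rfl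
    _ = (MvPolynomial.aeval (fayInv r i)) ((MvPolynomial.aeval (fayArgs r i)) b) := h3
    _ = b := by rw [← AlgHom.comp_apply, hcomp]; rfl

end EqB2
namespace EqB2
open Finset MvPolynomial

variable {r : ℕ}

def uK (r k : ℕ) : MFrac r := toF (Xn r k)
def bK (r n : ℕ) : MFrac r := toF (sumXn r n)
def cQ (r m : ℕ) : ℚ := (-1 : ℚ) ^ m * ((r - 1).choose m : ℚ)
def cK (r m : ℕ) : MFrac r := constF r (cQ r m)

def LK (r i m : ℕ) : MFrac r :=
  if m + 1 < i then uK r (m + 1)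
  else if m + 1 = i then -(bK r i)
  else if m = i then bK r (i + 1)
  else uK r m

lemma toF_sum {α : Type*} (s : Finset α) (f : α → MPoly r) :
    toF (∑ x ∈ s, f x) = ∑ x ∈ s, toF (f x) :=
  map_sum (algebraMap (MPoly r) (MFrac r)) f s

lemma toF_prod {α : Type*} (s : Finset α) (f : α → MPoly r) :
    toF (∏ x ∈ s, f x) = ∏ x ∈ s, toF (f x) :=
  map_prod (algebraMap (MPoly r) (MFrac r)) f s

lemma toF_mul (p q : MPoly r) : toF (p * q) = toF p * toF q :=
  map_mul (algebraMap (MPoly r) (MFrac r)) p q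

lemma toF_neg (p : MPoly r) : toF (-p) = -toF p :=
  map_neg (algebraMap (MPoly r) (MFrac r)) p

lemma toF_fayArgs {i m : ℕ} (h : m < r) :
    toF (MvPolynomial.aeval (fayArgs r i) (Xn r m)) = LK r i m := by
  rw [aeval_Xn, dif_pos h]
  show toF (fayArgs r i ⟨m, h⟩) = LK r i m
  rw [fayArgs, LK]
  simp only []
  split_ifs <;> simp [uK, bK, toF_neg]

lemma uK_ne_zero {k : ℕ} (h : k < r) : uK r k ≠ 0 := toF_ne_zero (Xn_ne_zero h)

lemma bK_ne_zero {n : ℕ} (h1 : 1 ≤ n) (h2 : n ≤ r) : bK r n ≠ 0 :=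
  toF_ne_zero (sumXn_ne_zero h1 h2)

lemma uK_r_eq_zero : uK r r = 0 := by simp [uK, Xn, toF]

lemma bK_succ (n : ℕ) : bK r (n + 1) = bK r n + uK r n := by
  rw [bK, sumXn_succ]
  exact map_add (algebraMap (MPoly r) (MFrac r)) _ _

lemma uK_zero_eq : uK r 0 = bK r 1 := by rw [bK, sumXn_one]; rfl

lemma Tprime_eq :
    Tprime r = (∑ m ∈ Finset.range r, cK r m * uK r m) / (∏ k ∈ Finset.range r, uK r k) := by
  rw [Tprime, toF_sum, toF_prod]
  congr 1
  refine Finset.sum_congr rfl (fun m _ => ?_)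
  rw [toF_mul]; rfl

lemma msubst_Tprime {i : ℕ} (h1 : 1 ≤ i) (h2 : i ≤ r) :
    msubst (fayArgs r i) (Tprime r)
      = (∑ m ∈ Finset.range r, cK r m * LK r i m) / (∏ m ∈ Finset.range r, LK r i m) := by
  rw [Tprime, msubst_div _ (fay_injective h1 h2)]
  congr 1
  · rw [map_sum, toF_sum]
    refine Finset.sum_congr rfl (fun m hm => ?_)
    rw [map_mul, MvPolynomial.aeval_C, toF_mul, toF_fayArgs (Finset.mem_range.mp hm)]
    rfl
  · rw [map_prod, toF_prod]
    exact Finset.prod_congr rfl (fun m hm => toF_fayArgs (Finset.mem_range.mp hm))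

end EqB2
namespace EqB2
open Finset MvPolynomial

variable {r : ℕ}

lemma LK_lt {i m : ℕ} (h : m + 1 < i) : LK r i m = uK r (m + 1) := by
  rw [LK, if_pos h]

lemma LK_mid1 (j : ℕ) : LK r (j + 1) j = -(bK r (j + 1)) := by
  rw [LK, if_neg (by omega), if_pos rfl]

lemma LK_mid2 (j : ℕ) : LK r (j + 1) (j + 1) = bK r (j + 2) := by
  rw [LK, if_neg (by omega), if_neg (by omega), if_pos rfl]

lemma LK_gt {i m : ℕ} (h : i < m) : LK r i m = uK r m := by
  rw [LK, if_neg (by omega), if_neg (by omega), if_neg (by omega)]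

lemma LK_prod {j : ℕ} (hj : j + 2 ≤ r) :
    ∏ m ∈ Finset.range r, LK r (j + 1) m
      = -(bK r (j + 1) * (bK r (j + 2) *
          ((∏ m ∈ Finset.range j, uK r (m + 1)) * ∏ m ∈ Finset.Ico (j + 2) r, uK r m))) := by
  rw [← Finset.prod_range_mul_prod_Ico _ (show j + 1 + 1 ≤ r from hj),
    Finset.prod_range_succ, Finset.prod_range_succ]
  rw [Finset.prod_congr rfl (fun m hm => LK_lt (by
      have := Finset.mem_range.mp hm; omega)),
    LK_mid1, LK_mid2,
    Finset.prod_congr rfl (fun m hm => LK_gt (show j + 1 < m by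
      have := (Finset.mem_Ico.mp hm).1; omega))]
  rw [show j + 1 + 1 = j + 2 from rfl]
  ring

lemma LK_sum {j : ℕ} (hj : j + 2 ≤ r) :
    ∑ m ∈ Finset.range r, cK r m * LK r (j + 1) m
      = (∑ m ∈ Finset.range j, cK r m * uK r (m + 1)) - cK r j * bK r (j + 1)
        + cK r (j + 1) * bK r (j + 2) + ∑ m ∈ Finset.Ico (j + 2) r, cK r m * uK r m := by
  have hlo : ∑ m ∈ Finset.range j, cK r m * LK r (j + 1) m
      = ∑ m ∈ Finset.range j, cK r m * uK r (m + 1) :=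
    Finset.sum_congr rfl (fun m hm => by
      rw [LK_lt (show m + 1 < j + 1 by have := Finset.mem_range.mp hm; omega)])
  have hhi : ∑ m ∈ Finset.Ico (j + 2) r, cK r m * LK r (j + 1) m
      = ∑ m ∈ Finset.Ico (j + 2) r, cK r m * uK r m :=
    Finset.sum_congr rfl (fun m hm => by
      rw [LK_gt (show j + 1 < m from by have := (Finset.mem_Ico.mp hm).1; omega)])
  rw [← Finset.sum_range_add_sum_Ico _ (show j + 1 + 1 ≤ r from hj),
    Finset.sum_range_succ, Finset.sum_range_succ, hlo, LK_mid1, LK_mid2,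
    show j + 1 + 1 = j + 2 from rfl, hhi]
  ring

lemma LK_prod_top (hr : 1 ≤ r) :
    ∏ m ∈ Finset.range r, LK r r m
      = -(bK r r * ∏ m ∈ Finset.range (r - 1), uK r (m + 1)) := by
  obtain ⟨t, rfl⟩ : ∃ t, r = t + 1 := ⟨r - 1, by omega⟩
  rw [Finset.prod_range_succ,
    Finset.prod_congr rfl (fun m hm => LK_lt (by have := Finset.mem_range.mp hm; omega))]
  rw [show LK (t + 1) (t + 1) t = -(bK (t + 1) (t + 1)) from by
    rw [LK, if_neg (by omega), if_pos rfl]]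
  simp only [Nat.add_sub_cancel]
  ring

lemma LK_sum_top (hr : 1 ≤ r) :
    ∑ m ∈ Finset.range r, cK r m * LK r r m
      = (∑ m ∈ Finset.range (r - 1), cK r m * uK r (m + 1)) - cK r (r - 1) * bK r r := by
  obtain ⟨t, rfl⟩ : ∃ t, r = t + 1 := ⟨r - 1, by omega⟩
  have hlo : ∑ m ∈ Finset.range t, cK (t + 1) m * LK (t + 1) (t + 1) m
      = ∑ m ∈ Finset.range t, cK (t + 1) m * uK (t + 1) (m + 1) :=
    Finset.sum_congr rfl (fun m hm => by
      rw [LK_lt (show m + 1 < t + 1 by have := Finset.mem_range.mp hm; omega)])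
  rw [Finset.sum_range_succ, hlo]
  rw [show LK (t + 1) (t + 1) t = -(bK (t + 1) (t + 1)) from by
    rw [LK, if_neg (by omega), if_pos rfl]]
  simp only [Nat.add_sub_cancel]
  ring

lemma shift_prod (j : ℕ) :
    ∏ m ∈ Finset.range j, uK r (m + 1) = ∏ m ∈ Finset.Ico 1 (j + 1), uK r m := by
  rw [Finset.prod_Ico_eq_prod_range]
  simp only [Nat.add_sub_cancel]
  exact Finset.prod_congr rfl (fun m _ => by rw [Nat.add_comm])

lemma Hp_split {j : ℕ} (hj : j + 2 ≤ r) :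
    uK r (j + 1) * ((∏ m ∈ Finset.range j, uK r (m + 1)) * ∏ m ∈ Finset.Ico (j + 2) r, uK r m)
      = ∏ m ∈ Finset.Ico 1 r, uK r m := by
  calc uK r (j + 1) * ((∏ m ∈ Finset.range j, uK r (m + 1)) * ∏ m ∈ Finset.Ico (j + 2) r, uK r m)
      = ((∏ m ∈ Finset.Ico 1 (j + 1), uK r m) * uK r (j + 1)) * ∏ m ∈ Finset.Ico (j + 2) r, uK r m := by
        rw [shift_prod]; ring
    _ = (∏ m ∈ Finset.Ico 1 (j + 1 + 1), uK r m) * ∏ m ∈ Finset.Ico (j + 2) r, uK r m := by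
        rw [Finset.prod_Ico_succ_top (show 1 ≤ j + 1 by omega)]
    _ = ∏ m ∈ Finset.Ico 1 r, uK r m := by
        rw [show j + 1 + 1 = j + 2 from rfl]
        exact Finset.prod_Ico_consecutive _ (by omega) hj

lemma prod_range_uK (hr : 1 ≤ r) :
    ∏ m ∈ Finset.range r, uK r m = bK r 1 * ∏ m ∈ Finset.Ico 1 r, uK r m := by
  rw [Finset.range_eq_Ico, ← Finset.prod_Ico_consecutive _ (show (0:ℕ) ≤ 1 by omega) hr]
  congr 1
  rw [show Finset.Ico 0 1 = Finset.range 1 from (Finset.range_eq_Ico 1).symm, Finset.prod_range_one,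
    uK_zero_eq]

lemma Hp_ne_zero : (∏ m ∈ Finset.Ico 1 r, uK r m) ≠ 0 :=
  Finset.prod_ne_zero_iff.mpr (fun m hm => uK_ne_zero (Finset.mem_Ico.mp hm).2)

end EqB2
namespace EqB2
open Finset MvPolynomial

variable {r : ℕ}

/-- The telescoping potential. -/
def FF (r j : ℕ) : MFrac r :=
  ((∑ m ∈ Finset.range j, cK r m * uK r (m + 1)) + ∑ m ∈ Finset.Ico (j + 2) r, cK r m * uK r m)
      * (bK r (j + 1))⁻¹
    + cK r (j + 1) * uK r (j + 1) * (bK r (j + 1))⁻¹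

lemma term_eq {j : ℕ} (hj : j + 2 ≤ r) :
    ((∑ m ∈ Finset.range j, cK r m * uK r (m + 1)) - cK r j * bK r (j + 1)
        + cK r (j + 1) * bK r (j + 2) + ∑ m ∈ Finset.Ico (j + 2) r, cK r m * uK r m)
      * uK r (j + 1) * (bK r (j + 1))⁻¹ * (bK r (j + 2))⁻¹
    = FF r j - FF r (j + 1) := by
  have hb1 : bK r (j + 1) ≠ 0 := bK_ne_zero (by omega) (by omega)
  have hb2 : bK r (j + 2) ≠ 0 := bK_ne_zero (by omega) (by omega)
  have hA := Finset.sum_range_succ (fun m => cK r m * uK r (m + 1)) j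
  have hB : ∑ m ∈ Finset.Ico (j + 2) r, cK r m * uK r m
      = cK r (j + 2) * uK r (j + 2) + ∑ m ∈ Finset.Ico (j + 3) r, cK r m * uK r m := by
    rcases lt_or_eq_of_le hj with h | h
    · exact Finset.sum_eq_sum_Ico_succ_bot h _
    · subst h
      rw [Finset.Ico_self, Finset.Ico_eq_empty (by omega)]
      simp [uK_r_eq_zero]
  have hbs : bK r (j + 2) = bK r (j + 1) + uK r (j + 1) := bK_succ (j + 1)
  rw [FF, FF, hB]
  rw [show j + 1 + 1 = j + 2 from rfl, show j + 1 + 2 = j + 3 from rfl, hA, hbs]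
  have hb2' : bK r (j + 1) + uK r (j + 1) ≠ 0 := hbs ▸ hb2
  field_simp
  ring

/-- value of `FF` at the top endpoint. -/
lemma FF_top (hr : 1 ≤ r) :
    FF r (r - 1) = (∑ m ∈ Finset.range (r - 1), cK r m * uK r (m + 1)) * (bK r r)⁻¹ := by
  obtain ⟨t, rfl⟩ : ∃ t, r = t + 1 := ⟨r - 1, by omega⟩
  simp only [FF, Nat.add_sub_cancel]
  rw [show t + 1 + 1 = t + 2 from rfl, Finset.Ico_eq_empty (by omega), Finset.sum_empty,
    uK_r_eq_zero]
  ring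

/-- value of `FF` at the bottom endpoint. -/
lemma FF_bot :
    FF r 0 = (∑ m ∈ Finset.Ico 2 r, cK r m * uK r m) * (bK r 1)⁻¹
      + cK r 1 * uK r 1 * (bK r 1)⁻¹ := by
  rw [FF]
  simp

end EqB2
namespace EqB2
open Finset MvPolynomial

variable {r : ℕ}

lemma toF_add (p q : MPoly r) : toF (p + q) = toF p + toF q :=
  map_add (algebraMap (MPoly r) (MFrac r)) p q

lemma F_id (hr : 1 ≤ r) :
    Tprime r = (∑ m ∈ Finset.range r, cK r m * uK r m) * (bK r 1)⁻¹
      * (∏ m ∈ Finset.Ico 1 r, uK r m)⁻¹ := by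
  rw [Tprime_eq, prod_range_uK hr, div_eq_mul_inv, mul_inv]
  ring

lemma F_mid' {j : ℕ} (hj : j + 2 ≤ r) :
    msubst (fayArgs r (j + 1)) (Tprime r)
      = (FF r (j + 1) - FF r j) * (∏ m ∈ Finset.Ico 1 r, uK r m)⁻¹ := by
  rw [msubst_Tprime (by omega) (by omega), LK_sum hj, LK_prod hj, div_neg, div_eq_mul_inv,
    mul_inv, mul_inv]
  have hQinv : ((∏ m ∈ Finset.range j, uK r (m + 1)) * ∏ m ∈ Finset.Ico (j + 2) r, uK r m)⁻¹
      = uK r (j + 1) * (∏ m ∈ Finset.Ico 1 r, uK r m)⁻¹ := by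
    have hu : uK r (j + 1) ≠ 0 := uK_ne_zero (by omega)
    rw [← Hp_split hj, mul_inv (uK r (j + 1)), ← mul_assoc, mul_inv_cancel₀ hu, one_mul]
  rw [hQinv]
  linear_combination (-(∏ m ∈ Finset.Ico 1 r, uK r m)⁻¹) * term_eq hj

lemma F_top' (hr2 : 2 ≤ r) :
    msubst (fayArgs r r) (Tprime r)
      = -(((∑ m ∈ Finset.range (r - 1), cK r m * uK r (m + 1)) - cK r (r - 1) * bK r r)
          * (bK r r)⁻¹ * (∏ m ∈ Finset.Ico 1 r, uK r m)⁻¹) := by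
  rw [msubst_Tprime (by omega) le_rfl, LK_sum_top (by omega), LK_prod_top (by omega),
    shift_prod (r - 1), show r - 1 + 1 = r from by omega, div_neg, div_eq_mul_inv, mul_inv]
  ring

lemma main (r : ℕ) (hr : 2 ≤ r) (hre : Even r) :
    Tprime r + ∑ i ∈ Finset.Icc 1 r, msubst (fayArgs r i) (Tprime r) = 0 := by
  have h1 : 1 ≤ r := by omega
  have hb1' : bK r 1 * (bK r 1)⁻¹ = 1 := mul_inv_cancel₀ (bK_ne_zero le_rfl h1)
  have hbr' : bK r r * (bK r r)⁻¹ = 1 := mul_inv_cancel₀ (bK_ne_zero h1 le_rfl)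
  have hc : cK r 0 + cK r (r - 1) = 0 := by
    have hodd : Odd (r - 1) := Nat.Even.sub_odd h1 hre odd_one
    have e0 : cQ r 0 = 1 := by simp [cQ]
    have e1 : cQ r (r - 1) = -1 := by
      rw [cQ, Nat.choose_self, hodd.neg_one_pow]; norm_num
    have hC : (MvPolynomial.C (1 : ℚ) : MPoly r) + MvPolynomial.C (-1) = 0 := by
      rw [← MvPolynomial.C_add]; norm_num
    rw [cK, cK, e0, e1, constF, constF, ← toF_add, hC]
    simp [toF]
  have hsplit : ∑ i ∈ Finset.Icc 1 r, msubst (fayArgs r i) (Tprime r)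
      = (∑ j ∈ Finset.range (r - 1), msubst (fayArgs r (j + 1)) (Tprime r))
        + msubst (fayArgs r r) (Tprime r) := by
    rw [← Finset.Ico_add_one_right_eq_Icc, Finset.sum_Ico_succ_top h1]
    congr 1
    rw [Finset.sum_Ico_eq_sum_range]
    exact Finset.sum_congr rfl (fun j _ => by rw [Nat.add_comm])
  have hcong : ∑ j ∈ Finset.range (r - 1), msubst (fayArgs r (j + 1)) (Tprime r)
      = ∑ j ∈ Finset.range (r - 1),
          (FF r (j + 1) - FF r j) * (∏ m ∈ Finset.Ico 1 r, uK r m)⁻¹ :=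
    Finset.sum_congr rfl (fun j hj => F_mid' (show j + 2 ≤ r from by
      have := Finset.mem_range.mp hj; omega))
  have hmids : ∑ j ∈ Finset.range (r - 1), msubst (fayArgs r (j + 1)) (Tprime r)
      = (FF r (r - 1) - FF r 0) * (∏ m ∈ Finset.Ico 1 r, uK r m)⁻¹ := by
    rw [hcong, ← Finset.sum_mul, Finset.sum_range_sub (fun k => FF r k)]
  have eN0 : ∑ m ∈ Finset.range r, cK r m * uK r m
      = cK r 0 * uK r 0 + cK r 1 * uK r 1 + ∑ m ∈ Finset.Ico 2 r, cK r m * uK r m := by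
    rw [Finset.range_eq_Ico, Finset.sum_eq_sum_Ico_succ_bot (show 0 < r by omega),
      show (0 : ℕ) + 1 = 1 from rfl, Finset.sum_eq_sum_Ico_succ_bot (show 1 < r by omega),
      show (1 : ℕ) + 1 = 2 from rfl]
    ring
  rw [hsplit, hmids, F_top' hr, F_id h1, FF_top h1, FF_bot, eN0, uK_zero_eq]
  linear_combination (cK r 0 * (∏ m ∈ Finset.Ico 1 r, uK r m)⁻¹) * hb1'
    + (cK r (r - 1) * (∏ m ∈ Finset.Ico 1 r, uK r m)⁻¹) * hbr'
    + (∏ m ∈ Finset.Ico 1 r, uK r m)⁻¹ * hc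

end EqB2

/-- **Equation (B.2).** For every even `r ≥ 2`, with `ū_j := u_1+⋯+u_j`:
`T'_r(u_1,…,u_r) + Σ_{j=1}^{r−1} T'_r(u_2,…,u_j,−ū_j,ū_{j+1},u_{j+2},…,u_r)
  + T'_r(u_2,…,u_r,−ū_r) = 0`. -/
theorem eq_B_2 (r : ℕ) (hr : 2 ≤ r) (hre : Even r) :
    Tprime r + ∑ i ∈ Finset.Icc 1 r, msubst (fayArgs r i) (Tprime r) = 0 := by
  exact EqB2.main r hr hre

end
end
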